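/- arXiv:1610.04523 — 6 statements merged into one kernel-verified Lean document; each statement's English description precedes it below -/
import Mathlib

section
/- Let Φ be a minimal unsatisfiable 2CNF formula. If Φ contains a unit clause, then Φ is in MU(1), i.e., Φ is minimal unsatisfiable and its deficiency (number of clauses minus number of variables) equals 1. -/
/-! Basic definitions: literals, clauses, CNF formulas. -/

/-- A literal is a variable together with a polarity. -/
abbrev Lit (V : Type) : Type := V × Bool

/-- Negation of a literal. -/
def Lit.neg {V : Type} (l : Lit V) : Lit V := (l.1, !l.2)

/-- A clause is a finite set of literals (a disjunction). -/
abbrev Clause (V : Type) : Type := Finset (Lit V)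

/-- A CNF formula is a finite set of clauses (a conjunction). -/
abbrev CNF (V : Type) : Type := Finset (Clause V)

section BasicDefs

variable {V : Type} [DecidableEq V]

/-- A literal holds under a Boolean assignment. -/
def Lit.holds (a : V → Bool) (l : Lit V) : Prop := a l.1 = l.2

/-- A clause holds under an assignment if some literal in it holds. -/
def Clause.holds (a : V → Bool) (C : Clause V) : Prop := ∃ l ∈ C, Lit.holds a l

/-- A CNF formula is satisfiable. -/
def CNF.sat (Φ : CNF V) : Prop := ∃ a : V → Bool, ∀ C ∈ Φ, Clause.holds a C

/-- A CNF formula is unsatisfiable. -/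
def CNF.unsat (Φ : CNF V) : Prop := ¬ CNF.sat Φ

/-- A CNF formula is minimal unsatisfiable: it is unsatisfiable and every
proper subformula is satisfiable. -/
def CNF.minUnsat (Φ : CNF V) : Prop :=
  CNF.unsat Φ ∧ ∀ Ψ : CNF V, Ψ ⊂ Φ → CNF.sat Ψ

/-- The set of variables occurring in a formula. -/
def CNF.vars (Φ : CNF V) : Finset V := Φ.biUnion (fun C => C.image Prod.fst)

/-- The deficiency of a formula: number of clauses minus number of variables. -/
def CNF.deficiency (Φ : CNF V) : ℤ := (Φ.card : ℤ) - ((CNF.vars Φ).card : ℤ)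

/-- MU(1): minimal unsatisfiable with deficiency 1. -/
def CNF.MU1 (Φ : CNF V) : Prop := CNF.minUnsat Φ ∧ CNF.deficiency Φ = 1

/-- A 2CNF formula: every clause has at most 2 literals. -/
def CNF.is2CNF (Φ : CNF V) : Prop := ∀ C ∈ Φ, C.card ≤ 2

/-- `R` is the resolvent of `C1` and `C2` upon the matching variable `x`. -/
def IsResolvent (C1 C2 R : Clause V) (x : V) : Prop :=
  (x, true) ∈ C1 ∧ (x, false) ∈ C2 ∧
    R = (C1.erase (x, true)) ∪ (C2.erase (x, false))

/-- One step of read-once resolution on a multiset of clauses: the two parent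
clauses are removed from the current multiset and the resolvent is added. -/
def RORStep (S T : Multiset (Clause V)) : Prop :=
  ∃ (C1 C2 R : Clause V) (x : V),
    C1 ∈ S ∧ C2 ∈ S.erase C1 ∧ IsResolvent C1 C2 R x ∧
    T = R ::ₘ ((S.erase C1).erase C2)

/-- Read-once derivability of the clause `π` from the multiset of clauses `S`. -/
def RORDeriv (S : Multiset (Clause V)) (π : Clause V) : Prop :=
  ∃ T : Multiset (Clause V), Relation.ReflTransGen RORStep S T ∧ π ∈ T

/-- The formula `Φ` has a read-once resolution refutation. -/
def CNF.hasROR (Φ : CNF V) : Prop := RORDeriv (Φ.val) (∅ : Clause V)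

end BasicDefs

/-- A resolution step: two parent clauses, a matching variable and a resolvent. -/
structure RStep (V : Type) where
  c1 : Clause V
  c2 : Clause V
  mv : V
  res : Clause V

section MoreDefs

variable {V : Type} [DecidableEq V]

/-- Validity of a resolution step. -/
def RStep.valid (s : RStep V) : Prop := IsResolvent s.c1 s.c2 s.res s.mv

/-- A list of resolution steps is a resolution derivation from `Φ`: each step is a
valid resolution step whose parents are clauses of `Φ` or resolvents of earlier steps. -/
def IsResDeriv (Φ : CNF V) (L : List (RStep V)) : Prop :=
  ∀ (i : ℕ) (h : i < L.length),
    RStep.valid (L.get ⟨i, h⟩) ∧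
    ((L.get ⟨i, h⟩).c1 ∈ Φ ∨
      ∃ j, ∃ _ : j < i, (L.get ⟨j, by omega⟩).res = (L.get ⟨i, h⟩).c1) ∧
    ((L.get ⟨i, h⟩).c2 ∈ Φ ∨
      ∃ j, ∃ _ : j < i, (L.get ⟨j, by omega⟩).res = (L.get ⟨i, h⟩).c2)

/-- `Φ` has a Var-ROR refutation: a resolution refutation in which every variable
is used at most once as a matching variable. -/
def CNF.hasVarROR (Φ : CNF V) : Prop :=
  ∃ L : List (RStep V), IsResDeriv Φ L ∧ (L.map RStep.mv).Nodup ∧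
    ∃ s ∈ L, s.res = (∅ : Clause V)

/-- `(Fx, Fnx)` is a splitting of `Φ` over the variable `x`: `Fx` consists of all clauses
of `Φ` containing the literal `x` with that literal removed, together with some clauses of
`Φ` not containing `x` nor `¬x` (and symmetrically for `Fnx` with `¬x`), and both `Fx` and
`Fnx` are minimal unsatisfiable. -/
def IsSplitting (Φ : CNF V) (x : V) (Fx Fnx : CNF V) : Prop :=
  ∃ S1 S2 : CNF V,
    S1 ⊆ Φ ∧ S2 ⊆ Φ ∧
    (∀ C ∈ S1, (x, true) ∉ C ∧ (x, false) ∉ C) ∧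
    (∀ C ∈ S2, (x, true) ∉ C ∧ (x, false) ∉ C) ∧
    Fx = ((Φ.filter (fun C => (x, true) ∈ C)).image (fun C => C.erase (x, true))) ∪ S1 ∧
    Fnx = ((Φ.filter (fun C => (x, false) ∈ C)).image (fun C => C.erase (x, false))) ∪ S2 ∧
    CNF.minUnsat Fx ∧ CNF.minUnsat Fnx

/-- A disjunctive splitting: a splitting where `Fx` and `Fnx` have no clause `σ_i`
(clause of `Φ` mentioning neither `x` nor `¬x`) in common. -/
def IsDisjSplitting (Φ : CNF V) (x : V) (Fx Fnx : CNF V) : Prop :=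
  ∃ S1 S2 : CNF V,
    S1 ⊆ Φ ∧ S2 ⊆ Φ ∧ Disjoint S1 S2 ∧
    (∀ C ∈ S1, (x, true) ∉ C ∧ (x, false) ∉ C) ∧
    (∀ C ∈ S2, (x, true) ∉ C ∧ (x, false) ∉ C) ∧
    Fx = ((Φ.filter (fun C => (x, true) ∈ C)).image (fun C => C.erase (x, true))) ∪ S1 ∧
    Fnx = ((Φ.filter (fun C => (x, false) ∈ C)).image (fun C => C.erase (x, false))) ∪ S2 ∧
    CNF.minUnsat Fx ∧ CNF.minUnsat Fnx

end MoreDefs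

section Aux

variable {V : Type} [DecidableEq V]

lemma sat_of_subset {Φ Ψ : CNF V} (h : Ψ ⊆ Φ) (hs : CNF.sat Φ) : CNF.sat Ψ := by
  obtain ⟨a, ha⟩ := hs
  exact ⟨a, fun C hC => ha C (h hC)⟩

lemma subsumption {Φ : CNF V} (hmu : CNF.minUnsat Φ) {C1 C2 : Clause V}
    (h1 : C1 ∈ Φ) (h2 : C2 ∈ Φ) (hsub : C1 ⊆ C2) : C1 = C2 := by
  by_contra hne
  obtain ⟨a, ha⟩ := hmu.2 (Φ.erase C2) (Finset.erase_ssubset h2)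
  apply hmu.1
  refine ⟨a, fun C hC => ?_⟩
  by_cases hCe : C = C2
  · subst hCe
    obtain ⟨m, hm, hml⟩ := ha C1 (Finset.mem_erase.2 ⟨hne, h1⟩)
    exact ⟨m, hsub hm, hml⟩
  · exact ha C (Finset.mem_erase.2 ⟨hCe, hC⟩)

lemma unsat_subset_eq {Φ Ψ : CNF V} (hmu : CNF.minUnsat Φ) (h : Ψ ⊆ Φ)
    (hu : CNF.unsat Ψ) : Ψ = Φ := by
  by_contra hne
  exact hu (hmu.2 Ψ (ssubset_of_subset_of_ne h hne))

lemma key_deficiency : ∀ n : ℕ, ∀ Φ : CNF V, Φ.card ≤ n → CNF.is2CNF Φ →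
    CNF.minUnsat Φ → (∃ C ∈ Φ, C.card = 1) → CNF.deficiency Φ = 1 := by
  intro n
  induction n with
  | zero =>
    intro Φ hcard _ _ hunit
    obtain ⟨C, hC, _⟩ := hunit
    have : Φ = ∅ := Finset.card_eq_zero.1 (Nat.le_zero.1 hcard)
    simp [this] at hC
  | succ n IH =>
    intro Φ hcard h2 hmu hunit
    obtain ⟨C0, hC0, hC0card⟩ := hunit
    obtain ⟨l, rfl⟩ := Finset.card_eq_one.1 hC0card
    obtain ⟨x, b⟩ := l
    have hbne : b ≠ !b := by cases b <;> simp
    -- the unit clause is the only clause containing (x, b)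
    have hunique : ∀ C ∈ Φ, (x, b) ∈ C → C = {(x, b)} := by
      intro C hC hl
      exact (subsumption hmu hC0 hC (Finset.singleton_subset_iff.2 hl)).symm
    have hvarx : ∀ m : Lit V, m.1 = x → m = (x, b) ∨ m = (x, !b) := by
      rintro ⟨y, p⟩ h
      dsimp at h
      subst h
      by_cases hp : p = b
      · left; rw [hp]
      · right
        have : p = !b := by cases p <;> cases b <;> simp_all
        rw [this]
    by_cases hbase : ({(x, !b)} : Clause V) ∈ Φ
    · -- base case: Φ = {{(x,b)}, {(x,!b)}}
      have hsubset : ({{(x, b)}, {(x, !b)}} : CNF V) ⊆ Φ := by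
        intro C hC
        rcases Finset.mem_insert.1 hC with rfl | hC
        · exact hC0
        · rw [Finset.mem_singleton.1 hC]; exact hbase
      have hpairu : CNF.unsat ({{(x, b)}, {(x, !b)}} : CNF V) := by
        rintro ⟨a, ha⟩
        obtain ⟨m1, hm1, hh1⟩ := ha {(x, b)} (by simp)
        obtain ⟨m2, hm2, hh2⟩ := ha {(x, !b)} (by simp)
        rw [Finset.mem_singleton.1 hm1] at hh1
        rw [Finset.mem_singleton.1 hm2] at hh2
        unfold Lit.holds at hh1 hh2
        simp at hh1 hh2
        rw [hh1] at hh2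
        exact hbne hh2
      have hΦeq : ({{(x, b)}, {(x, !b)}} : CNF V) = Φ :=
        unsat_subset_eq hmu hsubset hpairu
      have hne : ({(x, b)} : Clause V) ≠ {(x, !b)} := by
        intro h
        have := Finset.singleton_injective h
        simp at this
      have hc2 : ({{(x, b)}, {(x, !b)}} : CNF V).card = 2 := by
        rw [Finset.card_insert_of_notMem (by simpa using hne), Finset.card_singleton]
      have hvars : CNF.vars ({{(x, b)}, {(x, !b)}} : CNF V) = {x} := by
        ext y
        simp [CNF.vars]
      rw [← hΦeq]
      unfold CNF.deficiency
      rw [hc2, hvars, Finset.card_singleton]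
      norm_num
    · -- inductive step: unit propagation
      set Φ' : CNF V := (Φ.erase {(x, b)}).image (fun C => C.erase (x, !b)) with hΦ'def
      -- injectivity of the erase map
      have hinj : Set.InjOn (fun C : Clause V => C.erase (x, !b))
          (Φ.erase {(x, b)} : Finset (Clause V)) := by
        intro C1 h1 C2 h2 heq
        simp only at heq
        have h1' := Finset.mem_of_mem_erase h1
        have h2' := Finset.mem_of_mem_erase h2
        by_cases m1 : (x, !b) ∈ C1 <;> by_cases m2 : (x, !b) ∈ C2
        · have := congrArg (insert (x, !b)) heq
          rwa [Finset.insert_erase m1, Finset.insert_erase m2] at this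
        · exfalso
          rw [Finset.erase_eq_of_notMem m2] at heq
          have hsub : C2 ⊆ C1 := heq ▸ Finset.erase_subset _ _
          have := subsumption hmu h2' h1' hsub
          exact m2 (this ▸ m1)
        · exfalso
          rw [Finset.erase_eq_of_notMem m1] at heq
          have hsub : C1 ⊆ C2 := heq.symm ▸ Finset.erase_subset _ _
          have := subsumption hmu h1' h2' hsub
          exact m1 (this.symm ▸ m2)
        · rwa [Finset.erase_eq_of_notMem m1, Finset.erase_eq_of_notMem m2] at heq
      -- some clause contains (x, !b)
      have hex : ∃ C ∈ Φ, (x, !b) ∈ C := by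
        by_contra hno
        push_neg at hno
        obtain ⟨a, ha⟩ := hmu.2 (Φ.erase {(x, b)}) (Finset.erase_ssubset hC0)
        apply hmu.1
        refine ⟨Function.update a x b, fun C hC => ?_⟩
        by_cases hCl : C = {(x, b)}
        · subst hCl
          exact ⟨(x, b), Finset.mem_singleton_self _, by simp [Lit.holds]⟩
        · obtain ⟨m, hm, hml⟩ := ha C (Finset.mem_erase.2 ⟨hCl, hC⟩)
          refine ⟨m, hm, ?_⟩
          have hmx : m.1 ≠ x := by
            intro h
            rcases hvarx m h with rfl | rfl
            · exact hCl (hunique C hC hm)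
            · exact hno C hC hm
          unfold Lit.holds at hml ⊢
          rwa [Function.update_of_ne hmx]
      obtain ⟨Cw, hCw, hnlCw⟩ := hex
      have hCwnl : Cw ≠ {(x, b)} := by
        intro h
        rw [h, Finset.mem_singleton] at hnlCw
        exact hbne (Prod.mk.injEq .. ▸ hnlCw).2.symm
      have hCwcard : Cw.card = 2 := by
        have h1 : 1 ≤ Cw.card := Finset.card_pos.2 ⟨_, hnlCw⟩
        have h2' := h2 Cw hCw
        rcases Nat.lt_or_ge Cw.card 2 with hlt | hge
        · exfalso
          have : Cw.card = 1 := by omega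
          obtain ⟨m, rfl⟩ := Finset.card_eq_one.1 this
          rw [Finset.mem_singleton.1 hnlCw] at hbase
          exact hbase hCw
        · omega
      -- Φ' has a unit clause
      have hDmem : Cw.erase (x, !b) ∈ Φ' :=
        Finset.mem_image_of_mem _ (Finset.mem_erase.2 ⟨hCwnl, hCw⟩)
      have hDcard : (Cw.erase (x, !b)).card = 1 := by
        rw [Finset.card_erase_of_mem hnlCw, hCwcard]
      -- Φ' is 2CNF
      have hΦ'2 : CNF.is2CNF Φ' := by
        intro D hD
        obtain ⟨C, hC, rfl⟩ := Finset.mem_image.1 hD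
        exact le_trans (Finset.card_erase_le) (h2 C (Finset.mem_of_mem_erase hC))
      -- Φ' is unsatisfiable
      have hΦ'unsat : CNF.unsat Φ' := by
        rintro ⟨a, ha⟩
        apply hmu.1
        refine ⟨Function.update a x b, fun C hC => ?_⟩
        by_cases hCl : C = {(x, b)}
        · subst hCl
          exact ⟨(x, b), Finset.mem_singleton_self _, by simp [Lit.holds]⟩
        · have hmem : C.erase (x, !b) ∈ Φ' :=
            Finset.mem_image_of_mem _ (Finset.mem_erase.2 ⟨hCl, hC⟩)
          obtain ⟨m, hm, hml⟩ := ha _ hmem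
          have hmnl : m ≠ (x, !b) := Finset.ne_of_mem_erase hm
          have hmC : m ∈ C := Finset.mem_of_mem_erase hm
          refine ⟨m, hmC, ?_⟩
          have hmx : m.1 ≠ x := by
            intro h
            rcases hvarx m h with rfl | rfl
            · exact hCl (hunique C hC hmC)
            · exact hmnl rfl
          unfold Lit.holds at hml ⊢
          rwa [Function.update_of_ne hmx]
      -- Φ' is minimally unsatisfiable
      have hΦ'mu : CNF.minUnsat Φ' := by
        refine ⟨hΦ'unsat, fun Ψ hΨ => ?_⟩
        obtain ⟨D, hDΦ', hDΨ⟩ := Finset.exists_of_ssubset hΨ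
        have hΨsub : Ψ ⊆ Φ'.erase D := by
          intro E hE
          exact Finset.mem_erase.2 ⟨fun h => hDΨ (h ▸ hE), hΨ.subset hE⟩
        refine sat_of_subset hΨsub ?_
        obtain ⟨C, hC, rfl⟩ := Finset.mem_image.1 hDΦ'
        have hCΦ := Finset.mem_of_mem_erase hC
        have hCnl := (Finset.mem_erase.1 hC).1
        obtain ⟨a, ha⟩ := hmu.2 (Φ.erase C) (Finset.erase_ssubset hCΦ)
        have hax : a x = b := by
          obtain ⟨m, hm, hml⟩ := ha {(x, b)}
            (Finset.mem_erase.2 ⟨fun h => hCnl h.symm, hC0⟩)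
          rw [Finset.mem_singleton.1 hm] at hml
          exact hml
        refine ⟨a, fun D' hD' => ?_⟩
        have hD'Φ' := Finset.mem_of_mem_erase hD'
        have hD'ne := (Finset.mem_erase.1 hD').1
        obtain ⟨C', hC', rfl⟩ := Finset.mem_image.1 hD'Φ'
        have hC'ne : C' ≠ C := fun h => hD'ne (by rw [h])
        obtain ⟨m, hm, hml⟩ := ha C'
          (Finset.mem_erase.2 ⟨hC'ne, Finset.mem_of_mem_erase hC'⟩)
        have hmnl : m ≠ (x, !b) := by
          rintro rfl
          simp only [Lit.holds] at hml
          rw [hax] at hml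
          exact hbne hml
        exact ⟨m, Finset.mem_erase.2 ⟨hmnl, hm⟩, hml⟩
      -- variables of Φ'
      have hxvars : x ∈ CNF.vars Φ := by
        simp only [CNF.vars, Finset.mem_biUnion, Finset.mem_image]
        exact ⟨{(x, b)}, hC0, (x, b), Finset.mem_singleton_self _, rfl⟩
      have hvars : CNF.vars Φ' = (CNF.vars Φ).erase x := by
        ext y
        simp only [CNF.vars, Finset.mem_biUnion, Finset.mem_image, Finset.mem_erase]
        constructor
        · rintro ⟨D, hD, m, hm, rfl⟩
          obtain ⟨C, hC, rfl⟩ := Finset.mem_image.1 hD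
          have hCΦ := Finset.mem_of_mem_erase hC
          have hmnl : m ≠ (x, !b) := Finset.ne_of_mem_erase hm
          have hmC : m ∈ C := Finset.mem_of_mem_erase hm
          refine ⟨?_, C, hCΦ, m, hmC, rfl⟩
          intro h
          rcases hvarx m h with rfl | rfl
          · exact (Finset.mem_erase.1 hC).1 (hunique C hCΦ hmC)
          · exact hmnl rfl
        · rintro ⟨hyx, C, hC, m, hm, rfl⟩
          have hCl : C ≠ {(x, b)} := by
            rintro rfl
            rw [Finset.mem_singleton.1 hm] at hyx
            exact hyx rfl
          have hmnl : m ≠ (x, !b) := fun h => hyx (by rw [h])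
          exact ⟨C.erase (x, !b),
            Finset.mem_image_of_mem _ (Finset.mem_erase.2 ⟨hCl, hC⟩),
            m, Finset.mem_erase.2 ⟨hmnl, hm⟩, rfl⟩
      -- counting
      have hcard' : Φ'.card = Φ.card - 1 := by
        rw [hΦ'def, Finset.card_image_of_injOn hinj, Finset.card_erase_of_mem hC0]
      have hΦpos : 1 ≤ Φ.card := Finset.card_pos.2 ⟨_, hC0⟩
      have hvcard : (CNF.vars Φ').card = (CNF.vars Φ).card - 1 := by
        rw [hvars, Finset.card_erase_of_mem hxvars]
      have hvpos : 1 ≤ (CNF.vars Φ).card := Finset.card_pos.2 ⟨x, hxvars⟩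
      have hIH := IH Φ' (by omega) hΦ'2 hΦ'mu ⟨Cw.erase (x, !b), hDmem, hDcard⟩
      unfold CNF.deficiency at hIH ⊢
      rw [hcard', hvcard] at hIH
      rw [Nat.cast_sub hΦpos, Nat.cast_sub hvpos] at hIH
      push_cast at hIH ⊢
      omega

end Aux

/-- A minimal unsatisfiable 2CNF formula containing a unit clause
is in MU(1). -/
theorem stmt0 {V : Type} [DecidableEq V] (Φ : CNF V)
    (h2 : CNF.is2CNF Φ) (hmu : CNF.minUnsat Φ)
    (hunit : ∃ C ∈ Φ, C.card = 1) :
    CNF.MU1 Φ := ⟨hmu, key_deficiency Φ.card Φ le_rfl h2 hmu hunit⟩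
end

section
/- Let Φ be a minimal unsatisfiable 2CNF formula and x a variable of Φ. If (F_x, F_{¬x}) is a splitting of Φ over x, then both splitting formulas F_x and F_{¬x} are in MU(1). -/
section KeyLemmas

variable {V : Type} [DecidableEq V]

/-- In a minimal unsatisfiable formula, no clause is a proper subset of another. -/
lemma mu_no_subset {Ψ : CNF V} (hmu : CNF.minUnsat Ψ) :
    ∀ D1 ∈ Ψ, ∀ D2 ∈ Ψ, D1 ⊆ D2 → D1 = D2 := by
  intro D1 h1 D2 h2 hsub
  by_contra hne
  obtain ⟨a, ha⟩ := hmu.2 (Ψ.erase D2) (Finset.erase_ssubset h2)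
  apply hmu.1
  refine ⟨a, fun E hE => ?_⟩
  by_cases hED : E = D2
  · obtain ⟨m, hm, hh⟩ := ha D1 (Finset.mem_erase.mpr ⟨hne, h1⟩)
    exact hED ▸ ⟨m, hsub hm, hh⟩
  · exact ha E (Finset.mem_erase.mpr ⟨hED, hE⟩)

/-- In a minimal unsatisfiable formula, every literal occurring somewhere occurs also
with the opposite polarity. -/
lemma mu_both_polarities {Ψ : CNF V} (hmu : CNF.minUnsat Ψ) {x : V} {c : Bool}
    {C : Clause V} (hC : C ∈ Ψ) (hxc : (x, c) ∈ C) :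
    ∃ D ∈ Ψ, (x, !c) ∈ D := by
  by_contra h
  push_neg at h
  have hsub : Ψ.filter (fun C => (x, c) ∉ C) ⊂ Ψ :=
    Finset.filter_ssubset.mpr ⟨C, hC, by simp [hxc]⟩
  obtain ⟨a, ha⟩ := hmu.2 _ hsub
  apply hmu.1
  refine ⟨Function.update a x c, fun D hD => ?_⟩
  by_cases hxD : (x, c) ∈ D
  · exact ⟨(x, c), hxD, by simp [Lit.holds]⟩
  · obtain ⟨m, hm, hmh⟩ := ha D (Finset.mem_filter.mpr ⟨hD, hxD⟩)
    refine ⟨m, hm, ?_⟩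
    have hmx : m.1 ≠ x := by
      intro h1
      have : m = (x, m.2) := by rw [← h1]
      rcases Bool.eq_or_eq_not m.2 c with h2 | h2
      · exact hxD (by rw [h2] at this; exact this ▸ hm)
      · exact h D hD (by rw [h2] at this; exact this ▸ hm)
    unfold Lit.holds
    rw [Function.update_of_ne hmx]
    exact hmh

/-- Key lemma: a minimal unsatisfiable 2CNF formula containing a clause with at most
one literal has deficiency 1. Proved by induction via unit propagation. -/
lemma mu_2cnf_small_clause_deficiency :
    ∀ (n : ℕ) (Ψ : CNF V), Ψ.card ≤ n → CNF.is2CNF Ψ →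
    CNF.minUnsat Ψ → (∃ C ∈ Ψ, C.card ≤ 1) → CNF.deficiency Ψ = 1 := by
  intro n
  induction n with
  | zero =>
    intro Ψ hcard _ hmu ⟨C, hC, _⟩
    have := Finset.card_pos.mpr ⟨C, hC⟩
    omega
  | succ n ih =>
    rintro Ψ hcard h2 hmu ⟨C, hC, hC1⟩
    rcases Nat.le_one_iff_eq_zero_or_eq_one.mp hC1 with h0 | h1
    · -- C is the empty clause, so Ψ = {∅}
      have hCe : C = ∅ := Finset.card_eq_zero.mp h0
      subst hCe
      have hΨ : Ψ = {(∅ : Clause V)} := by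
        by_contra hne
        have hss : ({(∅ : Clause V)} : CNF V) ⊂ Ψ :=
          (Finset.singleton_subset_iff.mpr hC).ssubset_of_ne (fun h => hne h.symm)
        obtain ⟨a, ha⟩ := hmu.2 _ hss
        obtain ⟨m, hm, _⟩ := ha ∅ (Finset.mem_singleton_self _)
        exact absurd hm (Finset.notMem_empty m)
      subst hΨ
      simp [CNF.deficiency, CNF.vars]
    · -- C = {l} is a unit clause
      obtain ⟨l, rfl⟩ := Finset.card_eq_one.mp h1
      set R := Ψ.erase {l} with hR
      -- l does not occur in any other clause
      have hA : ∀ D ∈ R, l ∉ D := by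
        intro D hD hlD
        have hDΨ : D ∈ Ψ := Finset.mem_of_mem_erase hD
        have := mu_no_subset hmu {l} hC D hDΨ (Finset.singleton_subset_iff.mpr hlD)
        exact Finset.ne_of_mem_erase hD this.symm
      -- l.neg occurs in some other clause
      have hB : ∃ D ∈ R, Lit.neg l ∈ D := by
        by_contra h
        push_neg at h
        obtain ⟨a, ha⟩ := hmu.2 R (Finset.erase_ssubset hC)
        apply hmu.1
        refine ⟨Function.update a l.1 l.2, fun E hE => ?_⟩
        by_cases hEl : E = {l}
        · subst hEl
          exact ⟨l, Finset.mem_singleton_self l, by simp [Lit.holds]⟩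
        · have hER : E ∈ R := Finset.mem_erase.mpr ⟨hEl, hE⟩
          obtain ⟨m, hm, hmh⟩ := ha E hER
          have hmx : m.1 ≠ l.1 := by
            intro h1
            rcases Bool.eq_or_eq_not m.2 l.2 with h2 | h2
            · exact hA E hER (by rwa [show m = l from Prod.ext h1 h2] at hm)
            · exact h E hER (by rwa [show m = Lit.neg l from Prod.ext h1 h2] at hm)
          refine ⟨m, hm, ?_⟩
          unfold Lit.holds
          rw [Function.update_of_ne hmx]
          exact hmh
      -- the unit-propagated formula
      set Ψ' := R.image (fun D => D.erase (Lit.neg l)) with hΨ'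
      have hInj : Set.InjOn (fun D : Clause V => D.erase (Lit.neg l)) ↑R := by
        intro D1 h1 D2 h2 heq
        simp only at heq
        have h1Ψ : D1 ∈ Ψ := Finset.mem_of_mem_erase h1
        have h2Ψ : D2 ∈ Ψ := Finset.mem_of_mem_erase h2
        by_cases k1 : Lit.neg l ∈ D1 <;> by_cases k2 : Lit.neg l ∈ D2
        · have := congrArg (insert (Lit.neg l)) heq
          rwa [Finset.insert_erase k1, Finset.insert_erase k2] at this
        · exfalso
          have hsub : D2 ⊆ D1 := by
            rw [← Finset.erase_eq_of_notMem k2, ← heq]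
            exact Finset.erase_subset _ _
          have := mu_no_subset hmu D2 h2Ψ D1 h1Ψ hsub
          exact k2 (this ▸ k1)
        · exfalso
          have hsub : D1 ⊆ D2 := by
            rw [← Finset.erase_eq_of_notMem k1, heq]
            exact Finset.erase_subset _ _
          have := mu_no_subset hmu D1 h1Ψ D2 h2Ψ hsub
          exact k1 (this ▸ k2)
        · rwa [Finset.erase_eq_of_notMem k1, Finset.erase_eq_of_notMem k2] at heq
      have hcard' : Ψ'.card = Ψ.card - 1 := by
        rw [hΨ', Finset.card_image_of_injOn hInj, hR, Finset.card_erase_of_mem hC]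
      have hΨpos : 1 ≤ Ψ.card := Finset.card_pos.mpr ⟨{l}, hC⟩
      -- Ψ' is unsatisfiable
      have hUnsat' : CNF.unsat Ψ' := by
        rintro ⟨a, ha⟩
        apply hmu.1
        refine ⟨Function.update a l.1 l.2, fun E hE => ?_⟩
        by_cases hEl : E = {l}
        · subst hEl
          exact ⟨l, Finset.mem_singleton_self l, by simp [Lit.holds]⟩
        · have hER : E ∈ R := Finset.mem_erase.mpr ⟨hEl, hE⟩
          obtain ⟨m, hm, hmh⟩ := ha (E.erase (Lit.neg l)) (Finset.mem_image_of_mem _ hER)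
          have hmE : m ∈ E := Finset.mem_of_mem_erase hm
          have hmne : m ≠ Lit.neg l := Finset.ne_of_mem_erase hm
          have hmx : m.1 ≠ l.1 := by
            intro h1
            rcases Bool.eq_or_eq_not m.2 l.2 with h2 | h2
            · exact hA E hER (by rwa [show m = l from Prod.ext h1 h2] at hmE)
            · exact hmne (Prod.ext h1 h2)
          refine ⟨m, hmE, ?_⟩
          unfold Lit.holds
          rw [Function.update_of_ne hmx]
          exact hmh
      -- Ψ' is minimal
      have hMin' : ∀ Ψ'' : CNF V, Ψ'' ⊂ Ψ' → CNF.sat Ψ'' := by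
        intro Ψ'' hss
        set T := R.filter (fun D => D.erase (Lit.neg l) ∈ Ψ'') with hT
        have hTim : T.image (fun D => D.erase (Lit.neg l)) = Ψ'' := by
          apply Finset.Subset.antisymm
          · intro E hE
            obtain ⟨D, hD, rfl⟩ := Finset.mem_image.mp hE
            exact (Finset.mem_filter.mp hD).2
          · intro E hE
            obtain ⟨D, hD, rfl⟩ := Finset.mem_image.mp (hss.subset hE)
            exact Finset.mem_image_of_mem _ (Finset.mem_filter.mpr ⟨hD, hE⟩)
        have hTR : T ⊆ R := Finset.filter_subset _ _
        have hTne : T ≠ R := by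
          intro h
          rw [h] at hTim
          exact hss.ne hTim.symm
        obtain ⟨D0, hD0R, hD0T⟩ := Finset.exists_of_ssubset (hTR.ssubset_of_ne hTne)
        have hss2 : insert {l} T ⊂ Ψ := by
          refine Finset.ssubset_iff_of_subset ?_ |>.mpr ⟨D0, Finset.mem_of_mem_erase hD0R, ?_⟩
          · intro E hE
            rcases Finset.mem_insert.mp hE with rfl | hET
            · exact hC
            · exact Finset.mem_of_mem_erase (hTR hET)
          · intro hmem
            rcases Finset.mem_insert.mp hmem with h | h
            · exact Finset.ne_of_mem_erase hD0R h
            · exact hD0T h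
        obtain ⟨a, ha⟩ := hmu.2 _ hss2
        have hal : Lit.holds a l := by
          obtain ⟨m, hm, hh⟩ := ha {l} (Finset.mem_insert_self _ _)
          rwa [Finset.mem_singleton.mp hm] at hh
        refine ⟨a, fun E hE => ?_⟩
        rw [← hTim] at hE
        obtain ⟨D, hD, rfl⟩ := Finset.mem_image.mp hE
        obtain ⟨m, hm, hh⟩ := ha D (Finset.mem_insert_of_mem hD)
        refine ⟨m, Finset.mem_erase.mpr ⟨?_, hm⟩, hh⟩
        rintro rfl
        simp only [Lit.holds, Lit.neg] at hal hh
        rw [hal] at hh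
        simp at hh
      have hmu' : CNF.minUnsat Ψ' := ⟨hUnsat', hMin'⟩
      -- variables
      have hv1 : l.1 ∉ CNF.vars Ψ' := by
        intro h
        obtain ⟨E, hE, hmem⟩ := Finset.mem_biUnion.mp h
        obtain ⟨D, hD, rfl⟩ := Finset.mem_image.mp hE
        obtain ⟨m, hm, h1⟩ := Finset.mem_image.mp hmem
        have hmD : m ∈ D := Finset.mem_of_mem_erase hm
        have hmne : m ≠ Lit.neg l := Finset.ne_of_mem_erase hm
        rcases Bool.eq_or_eq_not m.2 l.2 with h2 | h2
        · exact hA D hD (by rwa [show m = l from Prod.ext h1 h2] at hmD)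
        · exact hmne (Prod.ext h1 h2)
      have hv2 : CNF.vars Ψ = insert l.1 (CNF.vars Ψ') := by
        ext w
        constructor
        · intro hw
          obtain ⟨E, hE, hmem⟩ := Finset.mem_biUnion.mp hw
          obtain ⟨m, hm, h1⟩ := Finset.mem_image.mp hmem
          by_cases hwl : w = l.1
          · exact hwl ▸ Finset.mem_insert_self _ _
          · refine Finset.mem_insert_of_mem ?_
            have hEl : E ≠ {l} := by
              rintro rfl
              exact hwl (by rw [← h1, Finset.mem_singleton.mp hm])
            have hER : E ∈ R := Finset.mem_erase.mpr ⟨hEl, hE⟩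
            refine Finset.mem_biUnion.mpr ⟨E.erase (Lit.neg l),
              Finset.mem_image_of_mem _ hER, Finset.mem_image.mpr ⟨m, ?_, h1⟩⟩
            refine Finset.mem_erase.mpr ⟨?_, hm⟩
            intro hmeq
            exact hwl (by rw [← h1, hmeq]; rfl)
        · intro hw
          rcases Finset.mem_insert.mp hw with rfl | hw'
          · exact Finset.mem_biUnion.mpr ⟨{l}, hC,
              Finset.mem_image.mpr ⟨l, Finset.mem_singleton_self l, rfl⟩⟩
          · obtain ⟨E, hE, hmem⟩ := Finset.mem_biUnion.mp hw'
            obtain ⟨D, hD, rfl⟩ := Finset.mem_image.mp hE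
            obtain ⟨m, hm, h1⟩ := Finset.mem_image.mp hmem
            exact Finset.mem_biUnion.mpr ⟨D, Finset.mem_of_mem_erase hD,
              Finset.mem_image.mpr ⟨m, Finset.mem_of_mem_erase hm, h1⟩⟩
      have hvcard : (CNF.vars Ψ).card = (CNF.vars Ψ').card + 1 := by
        rw [hv2, Finset.card_insert_of_notMem hv1]
      -- Ψ' is 2CNF with a small clause
      have h2' : CNF.is2CNF Ψ' := by
        intro E hE
        obtain ⟨D, hD, rfl⟩ := Finset.mem_image.mp hE
        exact le_trans (Finset.card_erase_le) (h2 D (Finset.mem_of_mem_erase hD))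
      have hsmall' : ∃ C ∈ Ψ', C.card ≤ 1 := by
        obtain ⟨D, hD, hnl⟩ := hB
        refine ⟨D.erase (Lit.neg l), Finset.mem_image_of_mem _ hD, ?_⟩
        rw [Finset.card_erase_of_mem hnl]
        have := h2 D (Finset.mem_of_mem_erase hD)
        omega
      have hdef' := ih Ψ' (by omega) h2' hmu' hsmall'
      unfold CNF.deficiency at hdef' ⊢
      rw [hvcard]
      push_cast
      omega

end KeyLemmas

/-- If `(Fx, Fnx)` is a splitting of a minimal unsatisfiable 2CNF
formula `Φ` over a variable `x` of `Φ`, then both splitting formulas are in MU(1). -/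
theorem stmt1 {V : Type} [DecidableEq V] (Φ : CNF V)
    (h2 : CNF.is2CNF Φ) (hmu : CNF.minUnsat Φ)
    (x : V) (hx : x ∈ CNF.vars Φ) (Fx Fnx : CNF V)
    (hsplit : IsSplitting Φ x Fx Fnx) :
    CNF.MU1 Fx ∧ CNF.MU1 Fnx := by
  obtain ⟨S1, S2, hS1, hS2, hS1x, hS2x, hFx, hFnx, hmux, hmunx⟩ := hsplit
  -- x occurs with some polarity in Φ
  obtain ⟨C0, hC0, hx0⟩ := Finset.mem_biUnion.mp hx
  obtain ⟨m0, hm0, hm0x⟩ := Finset.mem_image.mp hx0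
  have hm0e : (x, m0.2) ∈ C0 := by
    have hm : m0 = (x, m0.2) := Prod.ext hm0x rfl
    rwa [hm] at hm0
  -- both polarities occur
  have hboth : (∃ C ∈ Φ, (x, true) ∈ C) ∧ (∃ C ∈ Φ, (x, false) ∈ C) := by
    rcases Bool.eq_false_or_eq_true m0.2 with h | h
    · rw [h] at hm0e
      obtain ⟨D, hD, hDx⟩ := mu_both_polarities hmu hC0 hm0e
      exact ⟨⟨C0, hC0, hm0e⟩, ⟨D, hD, by simpa using hDx⟩⟩
    · rw [h] at hm0e
      obtain ⟨D, hD, hDx⟩ := mu_both_polarities hmu hC0 hm0e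
      exact ⟨⟨D, hD, by simpa using hDx⟩, ⟨C0, hC0, hm0e⟩⟩
  have key : ∀ (c : Bool) (S : CNF V), S ⊆ Φ →
      (∀ C ∈ S, (x, true) ∉ C ∧ (x, false) ∉ C) →
      (∃ C ∈ Φ, (x, c) ∈ C) →
      CNF.minUnsat ((Φ.filter (fun C => (x, c) ∈ C)).image (fun C => C.erase (x, c)) ∪ S) →
      CNF.MU1 ((Φ.filter (fun C => (x, c) ∈ C)).image (fun C => C.erase (x, c)) ∪ S) := by
    intro c S hSsub _ ⟨C, hCΦ, hCx⟩ hmuF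
    refine ⟨hmuF, mu_2cnf_small_clause_deficiency _ _ le_rfl ?_ hmuF ?_⟩
    · intro E hE
      rcases Finset.mem_union.mp hE with h | h
      · obtain ⟨D, hD, rfl⟩ := Finset.mem_image.mp h
        exact le_trans Finset.card_erase_le (h2 D (Finset.mem_filter.mp hD).1)
      · exact h2 E (hSsub h)
    · refine ⟨C.erase (x, c), Finset.mem_union_left _
        (Finset.mem_image_of_mem _ (Finset.mem_filter.mpr ⟨hCΦ, hCx⟩)), ?_⟩
      rw [Finset.card_erase_of_mem hCx]
      have := h2 C hCΦ
      omega
  exact ⟨hFx ▸ key true S1 hS1 hS1x hboth.1 (hFx ▸ hmux),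
    hFnx ▸ key false S2 hS2 hS2x hboth.2 (hFnx ▸ hmunx)⟩
end

section
/- Let Φ be a minimal unsatisfiable 2CNF formula. If Φ has a disjunctive splitting over some variable x, then Φ has a complete disjunctive splitting tree, i.e., a splitting tree in which every splitting used is disjunctive and every leaf is a formula containing at most one variable. -/
/-- `Φ` has a complete disjunctive splitting tree: a splitting tree all of whose
splittings are disjunctive and all of whose leaves contain at most one variable. -/
inductive HasCompleteDisjSplittingTree {V : Type} [DecidableEq V] : CNF V → Prop
  | leaf : ∀ Φ : CNF V, (CNF.vars Φ).card ≤ 1 → HasCompleteDisjSplittingTree Φ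
  | node : ∀ (Φ Fx Fnx : CNF V) (x : V),
      IsDisjSplitting Φ x Fx Fnx →
      HasCompleteDisjSplittingTree Fx → HasCompleteDisjSplittingTree Fnx →
      HasCompleteDisjSplittingTree Φ

section StmtTwoHelpers

variable {V : Type} [DecidableEq V]

lemma sat_empty' : CNF.sat (∅ : CNF V) :=
  ⟨fun _ => true, fun C hC => absurd hC (Finset.notMem_empty C)⟩

lemma sat_of_erase_of_holds' {Φ : CNF V} {C : Clause V} {a : V → Bool}
    (ha : ∀ D ∈ Φ.erase C, Clause.holds a D) (hC : Clause.holds a C) :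
    ∀ D ∈ Φ, Clause.holds a D := by
  intro D hD
  by_cases h : D = C
  · subst h; exact hC
  · exact ha D (Finset.mem_erase.mpr ⟨h, hD⟩)

lemma mu_sat_erase' {Φ : CNF V} (hmu : CNF.minUnsat Φ) {C : Clause V} (hC : C ∈ Φ) :
    ∃ a, ∀ D ∈ Φ.erase C, Clause.holds a D :=
  hmu.2 _ (Finset.erase_ssubset hC)

lemma mu_no_taut' {Φ : CNF V} (hmu : CNF.minUnsat Φ) {C : Clause V} (hC : C ∈ Φ)
    {v : V} {b : Bool} (h1 : (v, b) ∈ C) : (v, !b) ∉ C := by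
  intro h2
  obtain ⟨a, ha⟩ := mu_sat_erase' hmu hC
  apply hmu.1
  refine ⟨a, sat_of_erase_of_holds' ha ?_⟩
  by_cases h : a v = b
  · exact ⟨(v, b), h1, h⟩
  · exact ⟨(v, !b), h2, by rcases Bool.eq_false_or_eq_true (a v) with h' | h' <;>
      rcases Bool.eq_false_or_eq_true b with h'' | h'' <;> simp_all [Lit.holds]⟩

lemma exists_mu_subset' : ∀ (Φ : CNF V), CNF.unsat Φ → ∃ Ψ, Ψ ⊆ Φ ∧ CNF.minUnsat Ψ := by
  intro Φ
  induction Φ using Finset.strongInduction with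
  | _ Φ ih =>
    intro hU
    by_cases h : ∀ Ψ : CNF V, Ψ ⊂ Φ → CNF.sat Ψ
    · exact ⟨Φ, subset_rfl, hU, h⟩
    · push_neg at h
      obtain ⟨Ψ, hs, hus⟩ := h
      obtain ⟨Θ, h1, h2⟩ := ih Ψ hs hus
      exact ⟨Θ, h1.trans hs.subset, h2⟩

lemma minUnsat_singleton_empty' : CNF.minUnsat ({∅} : CNF V) := by
  constructor
  · rintro ⟨a, ha⟩
    obtain ⟨l, hl, -⟩ := ha ∅ (Finset.mem_singleton_self _)
    exact absurd hl (Finset.notMem_empty l)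
  · intro Ψ hΨ
    rw [Finset.ssubset_singleton_iff.mp hΨ]
    exact sat_empty'

lemma unit_filter' {Φ : CNF V} (hmu : CNF.minUnsat Φ) {y : V} {b : Bool}
    (hu : ({(y, b)} : Clause V) ∈ Φ) :
    Φ.filter (fun C => (y, b) ∈ C) = {({(y, b)} : Clause V)} := by
  apply Finset.eq_singleton_iff_unique_mem.mpr
  refine ⟨Finset.mem_filter.mpr ⟨hu, Finset.mem_singleton_self _⟩, ?_⟩
  intro C hC
  obtain ⟨hCΦ, hyC⟩ := Finset.mem_filter.mp hC
  by_contra hne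
  obtain ⟨a, ha⟩ := mu_sat_erase' hmu hCΦ
  have h1 : Clause.holds a {(y, b)} :=
    ha _ (Finset.mem_erase.mpr ⟨fun h => hne h.symm, hu⟩)
  obtain ⟨l, hl, hly⟩ := h1
  rw [Finset.mem_singleton] at hl
  subst hl
  exact hmu.1 ⟨a, sat_of_erase_of_holds' ha ⟨(y, b), hyC, hly⟩⟩

lemma key_split' {Φ : CNF V} (h2 : CNF.is2CNF Φ) (hmu : CNF.minUnsat Φ)
    {y : V} {b : Bool} (hu : ({(y, b)} : Clause V) ∈ Φ) :
    ∃ S G : CNF V, S ⊆ Φ ∧ (∀ C ∈ S, (y, true) ∉ C ∧ (y, false) ∉ C) ∧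
      G = ((Φ.filter (fun C => (y, !b) ∈ C)).image (fun C => C.erase (y, !b))) ∪ S ∧
      CNF.minUnsat G ∧ CNF.is2CNF G ∧ (∃ C ∈ G, C.card ≤ 1) ∧
      (CNF.vars G).card < (CNF.vars Φ).card := by
  set N : CNF V := (Φ.filter (fun C => (y, !b) ∈ C)).image (fun C => C.erase (y, !b)) with hN
  set Sig : CNF V := Φ.filter (fun C => (y, true) ∉ C ∧ (y, false) ∉ C) with hSig
  have hlit : ∀ (C : Clause V), (y, true) ∉ C → (y, false) ∉ C → ∀ l ∈ C, l.1 ≠ y := by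
    rintro C h1 h2 ⟨v, p⟩ hl hly
    simp only at hly
    subst hly
    cases p
    · exact h2 hl
    · exact h1 hl
  have hfreeSig : ∀ C ∈ Sig, (y, true) ∉ C ∧ (y, false) ∉ C :=
    fun C hC => (Finset.mem_filter.mp hC).2
  have hπlit : ∀ C ∈ Φ, (y, !b) ∈ C → ∀ l ∈ C.erase (y, !b), l.1 ≠ y := by
    rintro C hC hnb ⟨v, p⟩ hl hly
    simp only at hly
    subst hly
    have hmem := Finset.mem_erase.mp hl
    have hpb : p = b := by
      rcases Bool.eq_false_or_eq_true p with h | h <;>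
        rcases Bool.eq_false_or_eq_true b with h' | h' <;> simp_all
    subst hpb
    exact mu_no_taut' hmu hC hmem.2 hnb
  -- N ∪ Sig is unsatisfiable
  have hunsat : CNF.unsat (N ∪ Sig) := by
    rintro ⟨a, ha⟩
    apply hmu.1
    refine ⟨Function.update a y b, fun C hC => ?_⟩
    by_cases hb : (y, b) ∈ C
    · exact ⟨(y, b), hb, by simp [Lit.holds]⟩
    by_cases hnb : (y, !b) ∈ C
    · have hNm : C.erase (y, !b) ∈ N ∪ Sig :=
        Finset.mem_union_left _ (Finset.mem_image_of_mem _ (Finset.mem_filter.mpr ⟨hC, hnb⟩))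
      obtain ⟨l, hl, hal⟩ := ha _ hNm
      have hly : l.1 ≠ y := hπlit C hC hnb l hl
      exact ⟨l, (Finset.mem_erase.mp hl).2,
        by simpa [Lit.holds, Function.update_of_ne hly] using hal⟩
    · have hfree : (y, true) ∉ C ∧ (y, false) ∉ C := by
        cases b
        · exact ⟨hnb, hb⟩
        · exact ⟨hb, hnb⟩
      have hSigm : C ∈ N ∪ Sig :=
        Finset.mem_union_right _ (Finset.mem_filter.mpr ⟨hC, hfree⟩)
      obtain ⟨l, hl, hal⟩ := ha _ hSigm
      have hly : l.1 ≠ y := hlit C hfree.1 hfree.2 l hl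
      exact ⟨l, hl, by simpa [Lit.holds, Function.update_of_ne hly] using hal⟩
  obtain ⟨G, hGsub, hGmu⟩ := exists_mu_subset' _ hunsat
  -- N ⊆ G
  have hNG : N ⊆ G := by
    intro π hπ
    by_contra hπG
    obtain ⟨C, hCf, rfl⟩ := Finset.mem_image.mp hπ
    obtain ⟨hCΦ, hnbC⟩ := Finset.mem_filter.mp hCf
    obtain ⟨a, ha⟩ := mu_sat_erase' hmu hCΦ
    by_cases hay : a y = !b
    · exact hmu.1 ⟨a, sat_of_erase_of_holds' ha ⟨(y, !b), hnbC, hay⟩⟩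
    apply hGmu.1
    refine ⟨a, fun D hD => ?_⟩
    rcases Finset.mem_union.mp (hGsub hD) with hDN | hDSig
    · obtain ⟨C', hC'f, rfl⟩ := Finset.mem_image.mp hDN
      obtain ⟨hC'Φ, hnbC'⟩ := Finset.mem_filter.mp hC'f
      have hC'ne : C' ≠ C := by rintro rfl; exact hπG hD
      obtain ⟨l, hl, hal⟩ := ha C' (Finset.mem_erase.mpr ⟨hC'ne, hC'Φ⟩)
      refine ⟨l, Finset.mem_erase.mpr ⟨?_, hl⟩, hal⟩
      rintro rfl
      exact hay hal
    · obtain ⟨hDΦ, hyD⟩ := Finset.mem_filter.mp hDSig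
      have hDne : D ≠ C := by
        rintro rfl
        cases b
        · exact hyD.1 hnbC
        · exact hyD.2 hnbC
      exact ha D (Finset.mem_erase.mpr ⟨hDne, hDΦ⟩)
  have hGeq : N ∪ (G \ N) = G := by
    rw [Finset.union_sdiff_self_eq_union, Finset.union_eq_right.mpr hNG]
  have hSSig : G \ N ⊆ Sig := by
    intro D hD
    obtain ⟨hDG, hDN⟩ := Finset.mem_sdiff.mp hD
    rcases Finset.mem_union.mp (hGsub hDG) with h | h
    · exact absurd h hDN
    · exact h
  -- 2CNF
  have hG2 : CNF.is2CNF G := by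
    intro C hC
    rcases Finset.mem_union.mp (hGsub hC) with h | h
    · obtain ⟨D, hDf, rfl⟩ := Finset.mem_image.mp h
      exact le_trans (Finset.card_erase_le) (h2 D (Finset.mem_filter.mp hDf).1)
    · exact h2 C (Finset.mem_filter.mp h).1
  -- existence of negative occurrence, small clause
  have hneg : ∃ C ∈ Φ, (y, !b) ∈ C := by
    by_contra h
    push_neg at h
    have hN0 : N = ∅ := by
      rw [hN, Finset.filter_eq_empty_iff.mpr h, Finset.image_empty]
    have hGΦ : G ⊂ Φ := by
      have hGSig : G ⊆ Sig := by
        intro D hD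
        rcases Finset.mem_union.mp (hGsub hD) with h' | h'
        · rw [hN0] at h'; exact absurd h' (Finset.notMem_empty D)
        · exact h'
      refine (Finset.ssubset_iff_of_subset (hGSig.trans (Finset.filter_subset _ _))).mpr
        ⟨{(y, b)}, hu, fun hmem => ?_⟩
      have := (hfreeSig _ (hGSig hmem))
      cases b
      · exact this.2 (Finset.mem_singleton_self _)
      · exact this.1 (Finset.mem_singleton_self _)
    exact hGmu.1 (hmu.2 G hGΦ)
  obtain ⟨C', hC'Φ, hC'neg⟩ := hneg
  have hsmall : ∃ C ∈ G, C.card ≤ 1 := by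
    refine ⟨C'.erase (y, !b), hNG (Finset.mem_image_of_mem _
      (Finset.mem_filter.mpr ⟨hC'Φ, hC'neg⟩)), ?_⟩
    rw [Finset.card_erase_of_mem hC'neg]
    have := h2 C' hC'Φ
    omega
  -- variable cardinality
  have hyv : y ∈ CNF.vars Φ :=
    Finset.mem_biUnion.mpr ⟨_, hu, Finset.mem_image.mpr ⟨(y, b), Finset.mem_singleton_self _, rfl⟩⟩
  have hvsub : CNF.vars G ⊆ (CNF.vars Φ).erase y := by
    intro v hv
    obtain ⟨D, hDG, hvD⟩ := Finset.mem_biUnion.mp hv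
    obtain ⟨l, hl, rfl⟩ := Finset.mem_image.mp hvD
    rcases Finset.mem_union.mp (hGsub hDG) with h | h
    · obtain ⟨C0, hC0f, rfl⟩ := Finset.mem_image.mp h
      obtain ⟨hC0Φ, hC0nb⟩ := Finset.mem_filter.mp hC0f
      exact Finset.mem_erase.mpr ⟨hπlit C0 hC0Φ hC0nb l hl,
        Finset.mem_biUnion.mpr ⟨C0, hC0Φ,
          Finset.mem_image_of_mem _ ((Finset.mem_erase.mp hl).2)⟩⟩
    · obtain ⟨hDΦ, hyD⟩ := Finset.mem_filter.mp h
      exact Finset.mem_erase.mpr ⟨hlit D hyD.1 hyD.2 l hl,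
        Finset.mem_biUnion.mpr ⟨D, hDΦ, Finset.mem_image_of_mem _ hl⟩⟩
  have hcard : (CNF.vars G).card < (CNF.vars Φ).card :=
    lt_of_le_of_lt (Finset.card_le_card hvsub) (Finset.card_erase_lt_of_mem hyv)
  exact ⟨G \ N, G, (hSSig.trans (Finset.filter_subset _ _)),
    fun C hC => hfreeSig C (hSSig hC), hGeq.symm, hGmu, hG2, hsmall, hcard⟩

lemma tree_aux' : ∀ (n : ℕ) (Φ : CNF V), (CNF.vars Φ).card ≤ n → CNF.is2CNF Φ →
    CNF.minUnsat Φ → (∃ C ∈ Φ, C.card ≤ 1) → HasCompleteDisjSplittingTree Φ := by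
  intro n
  induction n with
  | zero =>
    intro Φ h _ _ _
    exact .leaf Φ (h.trans (by omega))
  | succ m ih =>
    intro Φ hn h2 hmu hsmall
    by_cases hv : (CNF.vars Φ).card ≤ 1
    · exact .leaf Φ hv
    obtain ⟨C0, hC0, hC0c⟩ := hsmall
    have hC0ne : C0 ≠ ∅ := by
      rintro rfl
      have hall : ∀ D ∈ Φ, D = ∅ := by
        intro D hD
        by_contra hne
        obtain ⟨a, ha⟩ := mu_sat_erase' hmu hD
        obtain ⟨l, hl, -⟩ := ha ∅ (Finset.mem_erase.mpr ⟨Ne.symm hne, hC0⟩)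
        exact absurd hl (Finset.notMem_empty l)
      have hvars : CNF.vars Φ = ∅ := by
        apply Finset.eq_empty_of_forall_notMem
        intro v hv'
        obtain ⟨D, hD, hvD⟩ := Finset.mem_biUnion.mp hv'
        rw [hall D hD] at hvD
        simp at hvD
      rw [hvars] at hv
      simp at hv
    have hC0one : C0.card = 1 := by
      have := Finset.card_pos.mpr (Finset.nonempty_iff_ne_empty.mpr hC0ne)
      omega
    obtain ⟨u, rfl⟩ := Finset.card_eq_one.mp hC0one
    obtain ⟨y, b⟩ := u
    obtain ⟨S, G, hSΦ, hSfree, hGeq, hGmu, hG2, hGsmall, hGcard⟩ := key_split' h2 hmu hC0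
    have hGtree : HasCompleteDisjSplittingTree G := ih G (by omega) hG2 hGmu hGsmall
    have hfe : Φ.filter (fun C => (y, b) ∈ C) = {({(y, b)} : Clause V)} := unit_filter' hmu hC0
    have hleaf : HasCompleteDisjSplittingTree ({(∅ : Clause V)} : CNF V) :=
      .leaf _ (by simp [CNF.vars])
    cases b
    · refine .node Φ G {(∅ : Clause V)} y
        ⟨S, ∅, hSΦ, Finset.empty_subset _, Finset.disjoint_empty_right _, hSfree,
          (by simp), ?_, ?_, hGmu, minUnsat_singleton_empty'⟩ hGtree hleaf
      · exact hGeq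
      · rw [hfe]
        simp
    · refine .node Φ {(∅ : Clause V)} G y
        ⟨∅, S, Finset.empty_subset _, hSΦ, Finset.disjoint_empty_left _, (by simp), hSfree,
          ?_, ?_, minUnsat_singleton_empty', hGmu⟩ hleaf hGtree
      · rw [hfe]
        simp
      · exact hGeq

end StmtTwoHelpers


/-- A minimal unsatisfiable 2CNF formula with a disjunctive splitting
over some variable has a complete disjunctive splitting tree. -/
theorem stmt2 {V : Type} [DecidableEq V] (Φ : CNF V)
    (h2 : CNF.is2CNF Φ) (hmu : CNF.minUnsat Φ)
    (h : ∃ (x : V) (Fx Fnx : CNF V), IsDisjSplitting Φ x Fx Fnx) :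
    HasCompleteDisjSplittingTree Φ := by
  obtain ⟨x, Fx, Fnx, hsp⟩ := h
  obtain ⟨S1, S2, hS1, hS2, hdisj, hf1, hf2, he1, he2, hm1, hm2⟩ := hsp
  have satur : ∀ S : CNF V, S ⊆ Φ → CNF.unsat S → S = Φ := by
    intro S hS hus
    by_contra hne
    exact hus (hmu.2 S (Finset.ssubset_iff_subset_ne.mpr ⟨hS, hne⟩))
  have hcontra : (∀ C ∈ Φ, (x, true) ∉ C ∧ (x, false) ∉ C) → False := by
    intro hfree
    have hfil1 : Φ.filter (fun C => (x, true) ∈ C) = ∅ :=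
      Finset.filter_eq_empty_iff.mpr (fun {C} hC => (hfree C hC).1)
    have hfil2 : Φ.filter (fun C => (x, false) ∈ C) = ∅ :=
      Finset.filter_eq_empty_iff.mpr (fun {C} hC => (hfree C hC).2)
    have hFx : Fx = S1 := by rw [he1, hfil1]; simp
    have hFnx : Fnx = S2 := by rw [he2, hfil2]; simp
    have hS1Φ : S1 = Φ := satur S1 hS1 (hFx ▸ hm1.1)
    have hS2Φ : S2 = Φ := satur S2 hS2 (hFnx ▸ hm2.1)
    have hΦe : Φ = ∅ := by
      have hd := hdisj
      rw [hS1Φ, hS2Φ] at hd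
      simpa using disjoint_self.mp hd
    exact hmu.1 (hΦe ▸ sat_empty')
  have hocc1 : ∃ D ∈ Φ, (x, true) ∈ D := by
    by_contra hno
    push_neg at hno
    have hfil : Φ.filter (fun C => (x, true) ∈ C) = ∅ :=
      Finset.filter_eq_empty_iff.mpr (fun {C} hC => hno C hC)
    have hFx : Fx = S1 := by rw [he1, hfil]; simp
    have hS1Φ : S1 = Φ := satur S1 hS1 (hFx ▸ hm1.1)
    exact hcontra (fun C hC => hf1 C (hS1Φ ▸ hC))
  have hocc2 : ∃ D ∈ Φ, (x, false) ∈ D := by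
    by_contra hno
    push_neg at hno
    have hfil : Φ.filter (fun C => (x, false) ∈ C) = ∅ :=
      Finset.filter_eq_empty_iff.mpr (fun {C} hC => hno C hC)
    have hFnx : Fnx = S2 := by rw [he2, hfil]; simp
    have hS2Φ : S2 = Φ := satur S2 hS2 (hFnx ▸ hm2.1)
    exact hcontra (fun C hC => hf2 C (hS2Φ ▸ hC))
  obtain ⟨D1, hD1, hD1x⟩ := hocc1
  obtain ⟨D2, hD2, hD2x⟩ := hocc2
  have hsmall1 : ∃ C ∈ Fx, C.card ≤ 1 := by
    refine ⟨D1.erase (x, true), ?_, ?_⟩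
    · rw [he1]
      exact Finset.mem_union_left _
        (Finset.mem_image_of_mem _ (Finset.mem_filter.mpr ⟨hD1, hD1x⟩))
    · rw [Finset.card_erase_of_mem hD1x]
      have := h2 D1 hD1
      omega
  have hsmall2 : ∃ C ∈ Fnx, C.card ≤ 1 := by
    refine ⟨D2.erase (x, false), ?_, ?_⟩
    · rw [he2]
      exact Finset.mem_union_left _
        (Finset.mem_image_of_mem _ (Finset.mem_filter.mpr ⟨hD2, hD2x⟩))
    · rw [Finset.card_erase_of_mem hD2x]
      have := h2 D2 hD2
      omega
  have h2Fx : CNF.is2CNF Fx := by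
    intro C hC
    rw [he1] at hC
    rcases Finset.mem_union.mp hC with h | h
    · obtain ⟨D, hDf, rfl⟩ := Finset.mem_image.mp h
      exact le_trans (Finset.card_erase_le) (h2 D (Finset.mem_filter.mp hDf).1)
    · exact h2 C (hS1 h)
  have h2Fnx : CNF.is2CNF Fnx := by
    intro C hC
    rw [he2] at hC
    rcases Finset.mem_union.mp hC with h | h
    · obtain ⟨D, hDf, rfl⟩ := Finset.mem_image.mp h
      exact le_trans (Finset.card_erase_le) (h2 D (Finset.mem_filter.mp hDf).1)
    · exact h2 C (hS2 h)
  exact .node Φ Fx Fnx x ⟨S1, S2, hS1, hS2, hdisj, hf1, hf2, he1, he2, hm1, hm2⟩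
    (tree_aux' _ Fx le_rfl h2Fx hm1 hsmall1)
    (tree_aux' _ Fnx le_rfl h2Fnx hm2 hsmall2)
end

section
/- Every minimal unsatisfiable 2CNF formula containing at least one unit clause has a read-once resolution refutation. -/
/-! ### Auxiliary development for the proof of `stmt10` -/

section Aux

set_option linter.unusedSectionVars false

variable {V : Type} [DecidableEq V]

private lemma lit_neg_ne (l : Lit V) : Lit.neg l ≠ l := by
  rcases l with ⟨x, b⟩
  simp [Lit.neg]

private lemma lit_eq_or_neg {m l : Lit V} (h : m.1 = l.1) : m = l ∨ m = Lit.neg l := by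
  rcases m with ⟨u, b⟩; rcases l with ⟨v, c⟩
  obtain rfl : u = v := h
  cases b <;> cases c <;> simp [Lit.neg]

/-- In a minimal unsatisfiable formula, no clause is contained in another. -/
private lemma minUnsat_antichain {Φ : CNF V} (h : CNF.minUnsat Φ) {C1 C2 : Clause V}
    (h1 : C1 ∈ Φ) (h2 : C2 ∈ Φ) (hsub : C1 ⊆ C2) : C1 = C2 := by
  by_contra hne
  obtain ⟨a, ha⟩ := h.2 (Φ.erase C2) (Finset.erase_ssubset h2)
  apply h.1
  refine ⟨a, fun C hC => ?_⟩
  by_cases hcc : C = C2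
  · subst hcc
    obtain ⟨m, hm, hmh⟩ := ha C1 (Finset.mem_erase.2 ⟨hne, h1⟩)
    exact ⟨m, hsub hm, hmh⟩
  · exact ha C (Finset.mem_erase.2 ⟨hcc, hC⟩)

/-- If a minimal unsatisfiable formula contains the unit clause `{l}`, then some
clause contains `¬l`. -/
private lemma neg_occurs {Φ : CNF V} (hmu : CNF.minUnsat Φ) {l : Lit V} (hl : {l} ∈ Φ) :
    ∃ D ∈ Φ, Lit.neg l ∈ D := by
  by_contra hno
  push_neg at hno
  obtain ⟨a, ha⟩ := hmu.2 (Φ.erase {l}) (Finset.erase_ssubset hl)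
  apply hmu.1
  refine ⟨fun z => if z = l.1 then l.2 else a z, fun C hC => ?_⟩
  by_cases hcc : C = {l}
  · subst hcc
    exact ⟨l, Finset.mem_singleton_self l, by simp [Lit.holds]⟩
  · obtain ⟨m, hm, hmh⟩ := ha C (Finset.mem_erase.2 ⟨hcc, hC⟩)
    by_cases hmx : m.1 = l.1
    · rcases lit_eq_or_neg hmx with rfl | rfl
      · exact ⟨m, hm, by simp [Lit.holds]⟩
      · exact absurd hm (hno C hC)
    · exact ⟨m, hm, by simpa [Lit.holds, hmx] using hmh⟩

private lemma mem_rel_erase {α : Type} [DecidableEq α] {r : α → α → Prop} :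
    ∀ {s t : Multiset α}, Multiset.Rel r s t → ∀ {a : α}, a ∈ s →
    ∃ b, b ∈ t ∧ r a b ∧ Multiset.Rel r (s.erase a) (t.erase b) := by
  intro s t h
  induction h with
  | zero => intro a ha; simp at ha
  | @cons a' b' s' t' hr hrel ih =>
    intro a ha
    by_cases haa : a = a'
    · subst haa
      exact ⟨b', Multiset.mem_cons_self _ _, hr, by simpa using hrel⟩
    · have ha' : a ∈ s' := by
        rcases Multiset.mem_cons.1 ha with h | h
        · exact absurd h haa
        · exact h
      obtain ⟨b, hb, hab, hrel'⟩ := ih ha'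
      by_cases hbb : b = b'
      · subst hbb
        refine ⟨b, Multiset.mem_cons_self _ _, hab, ?_⟩
        rw [Multiset.erase_cons_tail _ (Ne.symm haa), Multiset.erase_cons_head,
          ← Multiset.cons_erase hb]
        exact Multiset.Rel.cons hr hrel'
      · refine ⟨b, Multiset.mem_cons_of_mem hb, hab, ?_⟩
        rw [Multiset.erase_cons_tail _ (Ne.symm haa), Multiset.erase_cons_tail _ (Ne.symm hbb)]
        exact Multiset.Rel.cons hr hrel'

private lemma rel_map_self {α : Type} {r : α → α → Prop} {f : α → α} :
    ∀ (M : Multiset α), (∀ c ∈ M, r (f c) c) → Multiset.Rel r (M.map f) M := by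
  intro M
  induction M using Multiset.induction with
  | empty => intro _; simp
  | cons a s ih =>
    intro h
    rw [Multiset.map_cons]
    exact Multiset.Rel.cons (h a (Multiset.mem_cons_self a s))
      (ih fun c hc => h c (Multiset.mem_cons_of_mem hc))

/-- No clause of `S` mentions the variable `x`. -/
private def AvoidsVar (x : V) (S : Multiset (Clause V)) : Prop :=
  ∀ C ∈ S, ∀ b : Bool, (x, b) ∉ C

/-- Simulation of one ROR step: if every clause of `S` avoids the variable of `e` and
`S'` is obtained from `S` by adding the literal `e` to some clauses, then a step on `S`
can be simulated on `S'`. -/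
private lemma step_sim {e : Lit V} {S S' T : Multiset (Clause V)}
    (hx : AvoidsVar e.1 S)
    (hrel : Multiset.Rel (fun C C' => C' = C ∨ C' = insert e C) S S')
    (hstep : RORStep S T) :
    ∃ T', RORStep S' T' ∧ Multiset.Rel (fun C C' => C' = C ∨ C' = insert e C) T T' ∧
      AvoidsVar e.1 T := by
  obtain ⟨C1, C2, R, y, hC1, hC2, ⟨hy1, hy2, hR⟩, hT⟩ := hstep
  obtain ⟨C1', hC1', hr1, hrel1⟩ := mem_rel_erase hrel hC1
  obtain ⟨C2', hC2', hr2, hrel2⟩ := mem_rel_erase hrel1 hC2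
  have hC2S : C2 ∈ S := Multiset.mem_of_mem_erase hC2
  have hyx : y ≠ e.1 := fun hyx => hx C1 hC1 true (hyx ▸ hy1)
  have hne1 : e ≠ (y, true) := fun h => hyx (by rw [h])
  have hne2 : e ≠ (y, false) := fun h => hyx (by rw [h])
  have hy1' : (y, true) ∈ C1' := by
    rcases hr1 with rfl | rfl
    · exact hy1
    · exact Finset.mem_insert_of_mem hy1
  have hy2' : (y, false) ∈ C2' := by
    rcases hr2 with rfl | rfl
    · exact hy2
    · exact Finset.mem_insert_of_mem hy2
  refine ⟨(C1'.erase (y, true) ∪ C2'.erase (y, false)) ::ₘ ((S'.erase C1').erase C2'),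
    ⟨C1', C2', _, y, hC1', hC2', ⟨hy1', hy2', rfl⟩, rfl⟩, ?_, ?_⟩
  · subst hT
    refine Multiset.Rel.cons ?_ hrel2
    subst hR
    rcases hr1 with rfl | rfl <;> rcases hr2 with rfl | rfl
    · exact Or.inl rfl
    · right
      rw [Finset.erase_insert_of_ne hne2, Finset.union_insert]
    · right
      rw [Finset.erase_insert_of_ne hne1, Finset.insert_union]
    · right
      rw [Finset.erase_insert_of_ne hne1, Finset.erase_insert_of_ne hne2,
        Finset.insert_union, Finset.union_insert, Finset.insert_idem]
  · subst hT
    intro C hC b hbC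
    rcases Multiset.mem_cons.1 hC with rfl | hC
    · subst hR
      rcases Finset.mem_union.1 hbC with h | h
      · exact hx C1 hC1 b (Finset.mem_of_mem_erase h)
      · exact hx C2 hC2S b (Finset.mem_of_mem_erase h)
    · exact hx C (Multiset.mem_of_mem_erase (Multiset.mem_of_mem_erase hC)) b hbC

private lemma sims {e : Lit V} {S T : Multiset (Clause V)}
    (h : Relation.ReflTransGen RORStep S T) :
    ∀ S', AvoidsVar e.1 S →
      Multiset.Rel (fun C C' => C' = C ∨ C' = insert e C) S S' →
      ∃ T', Relation.ReflTransGen RORStep S' T' ∧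
        Multiset.Rel (fun C C' => C' = C ∨ C' = insert e C) T T' ∧ AvoidsVar e.1 T := by
  induction h with
  | refl => exact fun S' hx hrel => ⟨S', Relation.ReflTransGen.refl, hrel, hx⟩
  | tail _ hstep ih =>
    intro S' hx hrel
    obtain ⟨U', hU', hrelU, hxU⟩ := ih S' hx hrel
    obtain ⟨T', hstep', hrelT, hxT⟩ := step_sim hxU hrelU hstep
    exact ⟨T', hU'.tail hstep', hrelT, hxT⟩

/-- An ROR step is preserved by adding an untouched clause. -/
private lemma step_cons {a : Clause V} {S T : Multiset (Clause V)} (h : RORStep S T) :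
    RORStep (a ::ₘ S) (a ::ₘ T) := by
  obtain ⟨C1, C2, R, y, hC1, hC2, hres, rfl⟩ := h
  obtain ⟨U, rfl⟩ := Multiset.exists_cons_of_mem hC1
  rw [Multiset.erase_cons_head] at hC2
  obtain ⟨W, rfl⟩ := Multiset.exists_cons_of_mem hC2
  refine ⟨C1, C2, R, y, ?_, ?_, hres, ?_⟩
  · exact Multiset.mem_cons_of_mem (Multiset.mem_cons_self _ _)
  · rw [Multiset.cons_swap, Multiset.erase_cons_head]
    exact Multiset.mem_cons_of_mem (Multiset.mem_cons_self _ _)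
  · have h1 : (a ::ₘ C1 ::ₘ C2 ::ₘ W).erase C1 = a ::ₘ C2 ::ₘ W := by
      rw [Multiset.cons_swap, Multiset.erase_cons_head]
    rw [h1]
    have h2 : (a ::ₘ C2 ::ₘ W).erase C2 = a ::ₘ W := by
      rw [Multiset.cons_swap, Multiset.erase_cons_head]
    rw [h2, Multiset.erase_cons_head, Multiset.erase_cons_head, Multiset.cons_swap]

/-- Final resolution of the two complementary unit clauses. -/
private lemma final_step {l : Lit V} {M : Multiset (Clause V)}
    (h1 : {l} ∈ M) (h2 : ({Lit.neg l} : Clause V) ∈ M.erase {l}) :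
    ∃ T, RORStep M T ∧ (∅ : Clause V) ∈ T := by
  have hne : ({Lit.neg l} : Clause V) ≠ {l} := by
    simp [Finset.singleton_inj, lit_neg_ne l]
  rcases l with ⟨x, b⟩
  cases b
  · -- l = (x, false), neg l = (x, true)
    refine ⟨_, ⟨{((x, true) : Lit V)}, {((x, false) : Lit V)}, ∅, x,
      Multiset.mem_of_mem_erase h2, ?_, ⟨Finset.mem_singleton_self _,
      Finset.mem_singleton_self _, by simp⟩, rfl⟩, Multiset.mem_cons_self _ _⟩
    exact (Multiset.mem_erase_of_ne (Ne.symm hne)).2 h1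
  · -- l = (x, true), neg l = (x, false)
    exact ⟨_, ⟨{((x, true) : Lit V)}, {((x, false) : Lit V)}, ∅, x,
      h1, h2, ⟨Finset.mem_singleton_self _, Finset.mem_singleton_self _, by simp⟩, rfl⟩,
      Multiset.mem_cons_self _ _⟩

private lemma main_aux : ∀ (n : ℕ) (Φ : CNF V), Φ.card ≤ n → CNF.is2CNF Φ →
    CNF.minUnsat Φ → (∃ C ∈ Φ, C.card = 1) → CNF.hasROR Φ := by
  intro n
  induction n with
  | zero =>
    rintro Φ hcard _ _ ⟨C, hC, -⟩
    rw [Nat.le_zero, Finset.card_eq_zero] at hcard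
    subst hcard
    simp at hC
  | succ n ih =>
    rintro Φ hcard h2 hmu ⟨C, hC, hC1⟩
    obtain ⟨l, rfl⟩ := Finset.card_eq_one.1 hC1
    set nl := Lit.neg l with hnl_def
    by_cases hnlmem : ({nl} : Clause V) ∈ Φ
    · -- Case A: both units present; one resolution step suffices.
      obtain ⟨T, hstep, hmem⟩ := final_step (Finset.mem_def.1 hC)
        ((Multiset.mem_erase_of_ne (by simp [Finset.singleton_inj, lit_neg_ne l])).2
          (Finset.mem_def.1 hnlmem))
      exact ⟨T, Relation.ReflTransGen.single hstep, hmem⟩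
    · -- Case B: unit propagation.
      set Φ0 := Φ.erase {l} with hΦ0_def
      set f : Clause V → Clause V := fun D => D.erase nl with hf_def
      set Φ' := Φ0.image f with hΦ'_def
      -- l occurs only in the unit clause
      have hlonly : ∀ D ∈ Φ, l ∈ D → D = {l} := fun D hD hlD =>
        (minUnsat_antichain hmu hC hD (Finset.singleton_subset_iff.2 hlD)).symm
      -- injectivity of unit propagation
      have hinj : Set.InjOn f Φ0 := by
        intro D1 hD1 D2 hD2 hfD
        rw [Finset.mem_coe] at hD1 hD2
        have hD1Φ : D1 ∈ Φ := Finset.mem_of_mem_erase hD1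
        have hD2Φ : D2 ∈ Φ := Finset.mem_of_mem_erase hD2
        simp only [hf_def] at hfD
        by_cases h1 : nl ∈ D1 <;> by_cases h2 : nl ∈ D2
        · rw [← Finset.insert_erase h1, ← Finset.insert_erase h2, hfD]
        · have hsub : D2 ⊆ D1 := by
            rw [← Finset.erase_eq_of_notMem h2, ← hfD]
            exact Finset.erase_subset _ _
          have heq := minUnsat_antichain hmu hD2Φ hD1Φ hsub
          subst heq
          exact absurd h1 h2
        · have hsub : D1 ⊆ D2 := by
            rw [← Finset.erase_eq_of_notMem h1, hfD]
            exact Finset.erase_subset _ _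
          have heq := minUnsat_antichain hmu hD1Φ hD2Φ hsub
          subst heq
          exact absurd h2 h1
        · rw [← Finset.erase_eq_of_notMem h1, ← Finset.erase_eq_of_notMem h2]
          exact hfD
      -- no clause of Φ' mentions the variable of l
      have hnoX : ∀ E ∈ Φ', ∀ b : Bool, (l.1, b) ∉ E := by
        intro E hE b hbE
        obtain ⟨D, hD, rfl⟩ := Finset.mem_image.1 hE
        have hbD : (l.1, b) ∈ D := Finset.mem_of_mem_erase hbE
        have hDΦ : D ∈ Φ := Finset.mem_of_mem_erase hD
        rcases lit_eq_or_neg (show ((l.1, b) : Lit V).1 = l.1 from rfl) with h | h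
        · have := hlonly D hDΦ (h ▸ hbD)
          exact (Finset.mem_erase.1 hD).1 this
        · rw [← hnl_def] at h
          rw [h] at hbE
          exact (Finset.notMem_erase nl D) hbE
      -- Φ' is unsatisfiable
      have hΦ'unsat : CNF.unsat Φ' := by
        rintro ⟨a, ha⟩
        apply hmu.1
        refine ⟨fun z => if z = l.1 then l.2 else a z, fun D hD => ?_⟩
        by_cases hDl : D = {l}
        · subst hDl
          exact ⟨l, Finset.mem_singleton_self l, by simp [Lit.holds]⟩
        · have hD0 : D ∈ Φ0 := Finset.mem_erase.2 ⟨hDl, hD⟩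
          obtain ⟨m, hm, hmh⟩ := ha (f D) (Finset.mem_image_of_mem f hD0)
          have hmD : m ∈ D := Finset.mem_of_mem_erase hm
          have hmx : m.1 ≠ l.1 := by
            intro hmx
            rcases lit_eq_or_neg hmx with rfl | rfl
            · exact hDl (hlonly D hD hmD)
            · exact (Finset.notMem_erase nl D) hm
          exact ⟨m, hmD, by simpa [Lit.holds, hmx] using hmh⟩
      -- Φ' is minimal unsatisfiable
      have hΦ'min : CNF.minUnsat Φ' := by
        refine ⟨hΦ'unsat, fun Ψ' hΨ' => ?_⟩
        obtain ⟨E0, hE0Φ', hE0Ψ'⟩ := Finset.exists_of_ssubset hΨ'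
        obtain ⟨D0, hD0, rfl⟩ := Finset.mem_image.1 hE0Φ'
        have hΨsub : insert {l} (Φ0.filter (fun D => f D ∈ Ψ')) ⊆ Φ := by
          refine Finset.insert_subset hC ?_
          exact (Finset.filter_subset _ _).trans (Finset.erase_subset _ _)
        have hΨss : insert {l} (Φ0.filter (fun D => f D ∈ Ψ')) ⊂ Φ := by
          refine (Finset.ssubset_iff_of_subset hΨsub).2
            ⟨D0, Finset.mem_of_mem_erase hD0, ?_⟩
          intro hmem
          rcases Finset.mem_insert.1 hmem with h | h
          · exact (Finset.mem_erase.1 hD0).1 h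
          · exact hE0Ψ' (Finset.mem_filter.1 h).2
        obtain ⟨a, ha⟩ := hmu.2 _ hΨss
        have hal : a l.1 = l.2 := by
          obtain ⟨m, hm, hmh⟩ := ha {l} (Finset.mem_insert_self _ _)
          rw [Finset.mem_singleton] at hm
          subst hm
          exact hmh
        refine ⟨a, fun E hE => ?_⟩
        obtain ⟨D, hD, rfl⟩ := Finset.mem_image.1 (hΨ'.subset hE)
        obtain ⟨m, hm, hmh⟩ := ha D
          (Finset.mem_insert_of_mem (Finset.mem_filter.2 ⟨hD, hE⟩))
        have hmnl : m ≠ nl := by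
          rintro rfl
          rw [Lit.holds, hnl_def] at hmh
          simp only [Lit.neg] at hmh
          rw [hal] at hmh
          simp at hmh
        exact ⟨m, Finset.mem_erase.2 ⟨hmnl, hm⟩, hmh⟩
      -- Φ' is a 2CNF with a unit clause
      have hΦ'2 : CNF.is2CNF Φ' := by
        intro E hE
        obtain ⟨D, hD, rfl⟩ := Finset.mem_image.1 hE
        exact le_trans (Finset.card_le_card (Finset.erase_subset _ _))
          (h2 D (Finset.mem_of_mem_erase hD))
      have hΦ'unit : ∃ E ∈ Φ', E.card = 1 := by
        obtain ⟨D, hD, hnlD⟩ := neg_occurs hmu hC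
        have hDl : D ≠ {l} := by
          rintro rfl
          exact lit_neg_ne l (Finset.mem_singleton.1 hnlD)
        have hD0 : D ∈ Φ0 := Finset.mem_erase.2 ⟨hDl, hD⟩
        refine ⟨f D, Finset.mem_image_of_mem f hD0, ?_⟩
        have hcardD : (f D).card = D.card - 1 := Finset.card_erase_of_mem hnlD
        have hD2 : D.card ≤ 2 := h2 D hD
        have hDnnl : D ≠ {nl} := fun h => hnlmem (h ▸ hD)
        have hpos : D.card ≠ 1 := by
          intro h1
          obtain ⟨m, rfl⟩ := Finset.card_eq_one.1 h1
          rw [Finset.mem_singleton, ← hnl_def] at hnlD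
          exact hDnnl (by rw [← hnlD])
        have hDpos : 0 < D.card := Finset.card_pos.2 ⟨nl, hnlD⟩
        omega
      -- apply induction hypothesis
      have hcard' : Φ'.card ≤ n := by
        have h1 : Φ'.card = Φ0.card := Finset.card_image_of_injOn hinj
        have h2' : Φ0.card = Φ.card - 1 := Finset.card_erase_of_mem hC
        have h3 : 0 < Φ.card := Finset.card_pos.2 ⟨{l}, hC⟩
        omega
      obtain ⟨T, hRTG, hmemT⟩ := ih Φ' hcard' hΦ'2 hΦ'min hΦ'unit
      -- simulate the refutation with the extra literal nl added back
      have hrel0 : Multiset.Rel (fun C C' => C' = C ∨ C' = insert nl C) Φ'.val Φ0.val := by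
        rw [hΦ'_def, Finset.image_val_of_injOn hinj]
        refine rel_map_self _ fun D _ => ?_
        by_cases hnlD : nl ∈ D
        · exact Or.inr (Finset.insert_erase hnlD).symm
        · exact Or.inl (Finset.erase_eq_of_notMem hnlD).symm
      have havoid : AvoidsVar (V := V) l.1 Φ'.val := by
        intro E hE b
        exact hnoX E hE b
      obtain ⟨T', hRTG', hrelT, _⟩ :=
        sims (e := nl) hRTG Φ0.val havoid hrel0
      obtain ⟨E', hE'T', hrE', -⟩ := mem_rel_erase hrelT hmemT
      -- lift adding the unit clause {l}
      have hlift : Relation.ReflTransGen RORStep ({l} ::ₘ Φ0.val) ({l} ::ₘ T') :=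
        Relation.ReflTransGen.lift _ (fun _ _ h => step_cons h) _ _ hRTG'
      have hΦval : Φ.val = {l} ::ₘ Φ0.val := by
        rw [hΦ0_def, Finset.erase_val]
        exact (Multiset.cons_erase (Finset.mem_def.1 hC)).symm
      rcases hrE' with rfl | rfl
      · exact ⟨{l} ::ₘ T', hΦval ▸ hlift, Multiset.mem_cons_of_mem hE'T'⟩
      · have hE'eq : insert nl (∅ : Clause V) = {nl} := rfl
        rw [hE'eq] at hE'T'
        obtain ⟨T'', hstep, hmem⟩ := final_step (Multiset.mem_cons_self {l} T')
          (by rw [Multiset.erase_cons_head]; exact hE'T')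
        exact ⟨T'', (hΦval ▸ hlift).tail hstep, hmem⟩

end Aux

/-- Every minimal unsatisfiable 2CNF formula containing at least one
unit clause has a read-once resolution refutation. -/
theorem stmt10 {V : Type} [DecidableEq V] (Φ : CNF V)
    (h2 : CNF.is2CNF Φ) (hmu : CNF.minUnsat Φ)
    (hunit : ∃ C ∈ Φ, C.card = 1) :
    CNF.hasROR Φ := main_aux Φ.card Φ le_rfl h2 hmu hunit
end

section
/- Let Φ be a 2CNF formula and x_i a variable. If the unit clause (x_i) can be derived from Φ by resolution, then (x_i) can be derived from Φ by a read-once resolution derivation, i.e., one using each clause of Φ in at most one resolution step. -/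
/-- General resolution derivability of a clause from a CNF formula. -/
inductive Derives {V : Type} [DecidableEq V] (Φ : CNF V) : Clause V → Prop
  | ax : ∀ C ∈ Φ, Derives Φ C
  | res : ∀ (C1 C2 R : Clause V) (x : V),
      Derives Φ C1 → Derives Φ C2 → IsResolvent C1 C2 R x → Derives Φ R


/-! ### Auxiliary development for stmt14 -/

section Aux

variable {V : Type} [DecidableEq V]

@[simp] lemma Lit.neg_neg (l : Lit V) : l.neg.neg = l := by
  simp [Lit.neg]

lemma Lit.neg_ne (l : Lit V) : l.neg ≠ l := by
  simp [Lit.neg, Prod.ext_iff]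

lemma pair_erase_left {a b : Lit V} (h : a ≠ b) :
    ({a, b} : Clause V).erase a = {b} := by
  apply Finset.erase_insert
  simp [h]

lemma pair_erase_right {a b : Lit V} (h : a ≠ b) :
    ({a, b} : Clause V).erase b = {a} := by
  rw [Finset.pair_comm]
  exact pair_erase_left (Ne.symm h)

lemma pair_self (a : Lit V) : ({a, a} : Clause V) = {a} := by
  simp

/-- One ROR step resolving two explicit clauses at the head of the multiset. -/
lemma RORStep_of (C1 C2 : Clause V) (k : Lit V) (h1 : k ∈ C1) (h2 : Lit.neg k ∈ C2)
    (S : Multiset (Clause V)) :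
    RORStep (C1 ::ₘ C2 ::ₘ S) ((C1.erase k ∪ C2.erase (Lit.neg k)) ::ₘ S) := by
  obtain ⟨x, b⟩ := k
  cases b
  · have hneg : Lit.neg (x, false) = (x, true) := rfl
    rw [hneg] at h2
    refine ⟨C2, C1, C2.erase (x, true) ∪ C1.erase (x, false), x,
      Multiset.mem_cons_of_mem (Multiset.mem_cons_self _ _), ?_, ⟨h2, h1, rfl⟩, ?_⟩
    · rw [Multiset.cons_swap, Multiset.erase_cons_head]
      exact Multiset.mem_cons_self _ _
    · rw [Multiset.cons_swap, Multiset.erase_cons_head, Multiset.erase_cons_head, hneg,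
        Finset.union_comm]
  · have hneg : Lit.neg (x, true) = (x, false) := rfl
    rw [hneg] at h2
    refine ⟨C1, C2, C1.erase (x, true) ∪ C2.erase (x, false), x,
      Multiset.mem_cons_self _ _, ?_, ⟨h1, h2, rfl⟩, ?_⟩
    · rw [Multiset.erase_cons_head]
      exact Multiset.mem_cons_self _ _
    · rw [Multiset.erase_cons_head, Multiset.erase_cons_head, hneg]

lemma RORStep_add {S T : Multiset (Clause V)} (U : Multiset (Clause V)) (h : RORStep S T) :
    RORStep (S + U) (T + U) := by
  obtain ⟨C1, C2, R, x, h1, h2, hres, rfl⟩ := h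
  have e1 : (S + U).erase C1 = S.erase C1 + U := Multiset.erase_add_left_pos U h1
  have e2 : ((S + U).erase C1).erase C2 = (S.erase C1).erase C2 + U := by
    rw [e1]
    exact Multiset.erase_add_left_pos U h2
  refine ⟨C1, C2, R, x, Multiset.mem_add.2 (Or.inl h1), ?_, hres, ?_⟩
  · rw [e1]; exact Multiset.mem_add.2 (Or.inl h2)
  · rw [e2, Multiset.cons_add]

lemma RTG_add {S T : Multiset (Clause V)} (U : Multiset (Clause V))
    (h : Relation.ReflTransGen RORStep S T) :
    Relation.ReflTransGen RORStep (S + U) (T + U) := by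
  induction h with
  | refl => exact Relation.ReflTransGen.refl
  | tail _ h2 ih => exact ih.tail (RORStep_add U h2)

lemma RTG_cons (a : Clause V) {S T : Multiset (Clause V)}
    (h : Relation.ReflTransGen RORStep S T) :
    Relation.ReflTransGen RORStep (a ::ₘ S) (a ::ₘ T) := by
  have h' := RTG_add {a} h
  rwa [add_comm S {a}, add_comm T {a}, Multiset.singleton_add, Multiset.singleton_add] at h'

/-- Walks in the implication graph, recording the list of clauses used as edges. -/
inductive WalkL : Lit V → Lit V → List (Clause V) → Prop
  | nil (l : Lit V) : WalkL l l []
  | cons {l k m : Lit V} {cs : List (Clause V)} (C : Clause V)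
      (hC : C = {Lit.neg l, k}) (h : WalkL k m cs) : WalkL l m (C :: cs)

lemma WalkL.append {l k m : Lit V} {xs ys : List (Clause V)}
    (h1 : WalkL l k xs) (h2 : WalkL k m ys) : WalkL l m (xs ++ ys) := by
  induction h1 with
  | nil => exact h2
  | cons C hC _ ih => exact WalkL.cons C hC (ih h2)

lemma WalkL.split {l m : Lit V} : ∀ {xs ys : List (Clause V)},
    WalkL l m (xs ++ ys) → ∃ k, WalkL l k xs ∧ WalkL k m ys := by
  intro xs
  induction xs generalizing l with
  | nil => intro ys h; exact ⟨l, WalkL.nil l, h⟩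
  | cons x xs ih =>
    intro ys h
    cases h with
    | @cons _ k' _ _ _ hC h' =>
      obtain ⟨k, hk1, hk2⟩ := ih h'
      exact ⟨k, WalkL.cons x hC hk1, hk2⟩

lemma WalkL.nil_eq {l m : Lit V} (h : WalkL l m []) : l = m := by
  cases h; rfl

lemma WalkL.skew {l m : Lit V} {cs : List (Clause V)} (h : WalkL l m cs) :
    WalkL m.neg l.neg cs.reverse := by
  induction h with
  | nil => exact WalkL.nil _
  | cons C hC _ ih =>
    rw [List.reverse_cons]
    refine ih.append (WalkL.cons C ?_ (WalkL.nil _))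
    rw [hC, Lit.neg_neg, Finset.pair_comm]

/-- From a unit clause `{x}` and a walk from `x` to `y`, derive the unit clause `{y}`. -/
lemma FU : ∀ (cs : List (Clause V)) (x y : Lit V), WalkL x y cs →
    ∃ R, Relation.ReflTransGen RORStep (({x} : Clause V) ::ₘ (cs : Multiset (Clause V)))
      (({y} : Clause V) ::ₘ R) := by
  intro cs
  induction cs with
  | nil =>
    intro x y h
    cases h
    exact ⟨0, Relation.ReflTransGen.refl⟩
  | cons c cs ih =>
    intro x y h
    cases h with
    | @cons _ k _ _ _ hC h' =>
      by_cases hk : k = Lit.neg x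
      · have hc : c = ({k} : Clause V) := by rw [hC, hk]; simp
        obtain ⟨R', hR'⟩ := ih k y h'
        refine ⟨({x} : Clause V) ::ₘ R', ?_⟩
        have h0 : (({x} : Clause V) ::ₘ ((c :: cs : List (Clause V)) : Multiset (Clause V)))
            = ({k} : Clause V) ::ₘ ({x} : Clause V) ::ₘ (cs : Multiset (Clause V)) := by
          rw [← Multiset.cons_coe, hc, Multiset.cons_swap]
        rw [h0]
        have h1 := RTG_cons ({x} : Clause V) hR'
        rw [Multiset.cons_swap] at h1
        rw [Multiset.cons_swap ({y} : Clause V)]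
        exact h1
      · obtain ⟨R', hR'⟩ := ih k y h'
        refine ⟨R', ?_⟩
        have hstep := RORStep_of ({x} : Clause V) c x (Finset.mem_singleton_self x)
          (by rw [hC]; exact Finset.mem_insert_self _ _) (cs : Multiset (Clause V))
        have hres : ({x} : Clause V).erase x ∪ c.erase (Lit.neg x) = ({k} : Clause V) := by
          rw [Finset.erase_singleton, hC, Finset.erase_insert (by simp [Ne.symm hk]),
            Finset.empty_union]
        rw [hres] at hstep
        rw [← Multiset.cons_coe]
        exact (Relation.ReflTransGen.single hstep).trans hR'

/-- Folding a walk into a derivation: the outcome is one of three clauses. -/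
lemma fold : ∀ (cs : List (Clause V)) (l m : Lit V), WalkL l m cs → cs ≠ [] →
    ∃ (O : Clause V) (R : Multiset (Clause V)),
      (O = ({Lit.neg l, m} : Clause V) ∨ O = ({Lit.neg l} : Clause V) ∨ O = ({m} : Clause V)) ∧
      Relation.ReflTransGen RORStep (cs : Multiset (Clause V)) (O ::ₘ R) := by
  intro cs
  induction cs with
  | nil => intro l m _ hne; exact absurd rfl hne
  | cons c cs ih =>
    intro l m h _
    cases h with
    | @cons _ k _ _ _ hC h' =>
      cases cs with
      | nil =>
        cases h'
        refine ⟨c, 0, Or.inl hC, ?_⟩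
        exact Relation.ReflTransGen.refl
      | cons c2 cs2 =>
        obtain ⟨O', R', hdisj, hRTG⟩ := ih k m h' (by simp)
        have hlift : Relation.ReflTransGen RORStep
            ((c :: (c2 :: cs2) : List (Clause V)) : Multiset (Clause V)) (c ::ₘ O' ::ₘ R') := by
          rw [← Multiset.cons_coe]
          exact RTG_cons c hRTG
        have hkc : k ∈ c := by
          rw [hC]; exact Finset.mem_insert_of_mem (Finset.mem_singleton_self k)
        rcases hdisj with hO | hO | hO
        · by_cases h1 : Lit.neg l = k
          · by_cases h2 : Lit.neg k = m
            · refine ⟨O', c ::ₘ R', Or.inr (Or.inr ?_), ?_⟩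
              · rw [hO, h2, pair_self]
              · rw [Multiset.cons_swap] at hlift; exact hlift
            · have hstep := RORStep_of c O' k hkc
                (by rw [hO]; exact Finset.mem_insert_self _ _) R'
              have hres : c.erase k ∪ O'.erase (Lit.neg k) = ({m} : Clause V) := by
                rw [hC, h1, pair_self, Finset.erase_singleton, hO, pair_erase_left h2,
                  Finset.empty_union]
              rw [hres] at hstep
              exact ⟨{m}, R', Or.inr (Or.inr rfl), hlift.tail hstep⟩
          · by_cases h2 : Lit.neg k = m
            · have hstep := RORStep_of c O' k hkc
                (by rw [hO]; exact Finset.mem_insert_self _ _) R'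
              have hres : c.erase k ∪ O'.erase (Lit.neg k) = ({Lit.neg l} : Clause V) := by
                rw [hC, pair_erase_right h1, hO, h2, pair_self, Finset.erase_singleton,
                  Finset.union_empty]
              rw [hres] at hstep
              exact ⟨{Lit.neg l}, R', Or.inr (Or.inl rfl), hlift.tail hstep⟩
            · have hstep := RORStep_of c O' k hkc
                (by rw [hO]; exact Finset.mem_insert_self _ _) R'
              have hres : c.erase k ∪ O'.erase (Lit.neg k) = ({Lit.neg l, m} : Clause V) := by
                rw [hC, pair_erase_right h1, hO, pair_erase_left h2, ← Finset.insert_eq]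
              rw [hres] at hstep
              exact ⟨{Lit.neg l, m}, R', Or.inl rfl, hlift.tail hstep⟩
        · by_cases h1 : Lit.neg l = k
          · refine ⟨c, O' ::ₘ R', Or.inr (Or.inl ?_), hlift⟩
            rw [hC, h1, pair_self, ← h1]
          · have hstep := RORStep_of c O' k hkc
              (by rw [hO]; exact Finset.mem_singleton_self _) R'
            have hres : c.erase k ∪ O'.erase (Lit.neg k) = ({Lit.neg l} : Clause V) := by
              rw [hC, pair_erase_right h1, hO, Finset.erase_singleton, Finset.union_empty]
            rw [hres] at hstep
            exact ⟨{Lit.neg l}, R', Or.inr (Or.inl rfl), hlift.tail hstep⟩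
        · refine ⟨O', c ::ₘ R', Or.inr (Or.inr hO), ?_⟩
          rw [Multiset.cons_swap] at hlift; exact hlift

lemma coe_le_of_nodup {cs : List (Clause V)} (h : cs.Nodup) {S : Multiset (Clause V)}
    (hm : ∀ c ∈ cs, c ∈ S) : (cs : Multiset (Clause V)) ≤ S := by
  rw [Multiset.le_iff_count]
  intro a
  by_cases ha : a ∈ cs
  · have h1 : Multiset.count a (cs : Multiset (Clause V)) ≤ 1 :=
      Multiset.nodup_iff_count_le_one.1 (Multiset.coe_nodup.2 h) a
    have h2 : 1 ≤ Multiset.count a S := Multiset.one_le_count_iff_mem.2 (hm a ha)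
    omega
  · have h0 : Multiset.count a (cs : Multiset (Clause V)) = 0 :=
      Multiset.count_eq_zero.2 (by simpa using ha)
    omega

/-- Every non-nodup list contains a first duplicated pair. -/
lemma exists_dup_decomp : ∀ (cs : List (Clause V)), ¬ cs.Nodup →
    ∃ (A B C : List (Clause V)) (c : Clause V),
      cs = A ++ c :: B ++ c :: C ∧ (A ++ c :: B).Nodup := by
  intro cs
  induction cs with
  | nil => intro h; exact absurd List.nodup_nil h
  | cons a t ih =>
    intro h
    by_cases ht : t.Nodup
    · have ha : a ∈ t := by
        by_contra h'
        exact h (List.nodup_cons.2 ⟨h', ht⟩)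
      obtain ⟨B, C, rfl⟩ := List.append_of_mem ha
      refine ⟨[], B, C, a, by simp, ?_⟩
      have h1 : (a :: (B ++ C)).Nodup := List.nodup_middle.1 ht
      have hsub : List.Sublist (a :: B) (a :: (B ++ C)) :=
        (List.sublist_append_left B C).cons_cons a
      simpa using h1.sublist hsub
    · obtain ⟨A, B, C, c, rfl, hnd⟩ := ih ht
      by_cases haP : a ∈ A ++ c :: B
      · rcases List.mem_append.1 haP with haA | haB
        · obtain ⟨P1, P2, rfl⟩ := List.append_of_mem haA
          refine ⟨[], P1, P2 ++ c :: B ++ c :: C, a, by simp, ?_⟩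
          have h1 : (P1 ++ a :: P2).Nodup := (List.nodup_append.1 hnd).1
          have h2 : (a :: (P1 ++ P2)).Nodup := List.nodup_middle.1 h1
          have hsub : List.Sublist (a :: P1) (a :: (P1 ++ P2)) :=
            (List.sublist_append_left P1 P2).cons_cons a
          simpa using h2.sublist hsub
        · rcases List.mem_cons.1 haB with rfl | haB'
          · refine ⟨[], A, B ++ a :: C, a, by simp, ?_⟩
            have h2 : (a :: (A ++ B)).Nodup := List.nodup_middle.1 hnd
            have hsub : List.Sublist (a :: A) (a :: (A ++ B)) :=
              (List.sublist_append_left A B).cons_cons a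
            simpa using h2.sublist hsub
          · obtain ⟨P1, P2, rfl⟩ := List.append_of_mem haB'
            refine ⟨[], A ++ c :: P1, P2 ++ c :: C, a, by simp, ?_⟩
            have h2 : (a :: (A ++ c :: P1 ++ P2)).Nodup := by
              apply List.nodup_middle.1
              simpa using hnd
            have hsub : List.Sublist (a :: (A ++ c :: P1)) (a :: (A ++ c :: P1 ++ P2)) :=
              (List.sublist_append_left (A ++ c :: P1) P2).cons_cons a
            simpa using h2.sublist hsub
      · exact ⟨a :: A, B, C, c, by simp, List.nodup_cons.2 ⟨haP, hnd⟩⟩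

lemma pair_rep {C : Clause V} (h2 : C.card ≤ 2) {t : Lit V} (ht : t ∈ C) :
    ∃ a, C = {a, t} := by
  have hce : (C.erase t).card ≤ 1 := by
    rw [Finset.card_erase_of_mem ht]; omega
  rcases Finset.eq_empty_or_nonempty (C.erase t) with he | hne
  · refine ⟨t, ?_⟩
    rw [pair_self]
    have h0 := Finset.insert_erase ht
    rw [he] at h0
    simpa using h0.symm
  · obtain ⟨a, ha⟩ : ∃ a, C.erase t = {a} := by
      rw [← Finset.card_eq_one]
      have := Finset.card_pos.2 hne
      omega
    refine ⟨a, ?_⟩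
    have h0 := Finset.insert_erase ht
    rw [ha] at h0
    rw [← h0, Finset.pair_comm]

/-- Soundness: every derivable clause has ≤ 2 literals, and any pair
representation yields a walk. -/
lemma derives_walk {Φ : CNF V} (h2 : CNF.is2CNF Φ) {C : Clause V} (h : Derives Φ C) :
    C.card ≤ 2 ∧ ∀ l m : Lit V, C = {l, m} →
      ∃ cs : List (Clause V), cs ≠ [] ∧ (∀ D ∈ cs, D ∈ Φ) ∧ WalkL (Lit.neg l) m cs := by
  induction h with
  | ax C hC =>
    refine ⟨h2 C hC, ?_⟩
    intro l m hlm
    refine ⟨[C], by simp, by simp [hC], ?_⟩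
    refine WalkL.cons C ?_ (WalkL.nil m)
    rw [hlm, Lit.neg_neg]
  | res C1 C2 R x hd1 hd2 hres ih1 ih2 =>
    obtain ⟨hxT, hxF, hR⟩ := hres
    obtain ⟨hc1, hw1⟩ := ih1
    obtain ⟨hc2, hw2⟩ := ih2
    obtain ⟨a, ha⟩ := pair_rep hc1 hxT
    obtain ⟨b, hb⟩ := pair_rep hc2 hxF
    have hcard : R.card ≤ 2 := by
      rw [hR]
      calc (C1.erase (x, true) ∪ C2.erase (x, false)).card
          ≤ (C1.erase (x, true)).card + (C2.erase (x, false)).card := Finset.card_union_le _ _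
        _ ≤ 2 := by
            rw [Finset.card_erase_of_mem hxT, Finset.card_erase_of_mem hxF]
            omega
    refine ⟨hcard, ?_⟩
    obtain ⟨cs1, hn1, hm1, hwa⟩ := hw1 a (x, true) ha
    obtain ⟨cs1', hn1', hm1', hwa'⟩ := hw1 (x, true) a (by rw [ha, Finset.pair_comm])
    obtain ⟨cs2, hn2, hm2, hwb⟩ := hw2 b (x, false) hb
    obtain ⟨cs2', hn2', hm2', hwb'⟩ := hw2 (x, false) b (by rw [hb, Finset.pair_comm])
    have hnegT : Lit.neg (x, true) = (x, false) := rfl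
    have hnegF : Lit.neg (x, false) = (x, true) := rfl
    rw [hnegT] at hwa'
    rw [hnegF] at hwb'
    -- hwa : ¬a ⇝ (x,true), hwa' : (x,false) ⇝ a, hwb : ¬b ⇝ (x,false), hwb' : (x,true) ⇝ b
    by_cases hax : a = (x, true)
    · by_cases hbx : b = (x, false)
      · intro l m hlm
        exfalso
        have hRe : R = ∅ := by
          rw [hR, ha, hb, hax, hbx, pair_self, pair_self, Finset.erase_singleton,
            Finset.erase_singleton, Finset.union_empty]
        rw [hRe] at hlm
        exact absurd hlm.symm (by simp)
      · -- R = {b}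
        have hRb : R = ({b} : Clause V) := by
          rw [hR, ha, hax, pair_self, Finset.erase_singleton, hb, pair_erase_right hbx,
            Finset.empty_union]
        intro l m hlm
        rw [hRb] at hlm
        have hl : l = b := by
          have h0 : l ∈ ({b} : Clause V) := by rw [hlm]; exact Finset.mem_insert_self _ _
          simpa using h0
        have hm : m = b := by
          have h0 : m ∈ ({b} : Clause V) := by
            rw [hlm]; exact Finset.mem_insert_of_mem (Finset.mem_singleton_self m)
          simpa using h0
        subst hl; subst hm
        refine ⟨cs2 ++ cs1' ++ cs2', by simp [hn2], ?_, ?_⟩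
        · intro D hD
          simp only [List.mem_append] at hD
          rcases hD with (hD | hD) | hD
          exacts [hm2 D hD, hm1' D hD, hm2' D hD]
        · refine (hwb.append ?_).append hwb'
          rw [← hax]; exact hwa'
    · by_cases hbx : b = (x, false)
      · -- R = {a}
        have hRa : R = ({a} : Clause V) := by
          rw [hR, ha, pair_erase_right hax, hb, hbx, pair_self, Finset.erase_singleton,
            Finset.union_empty]
        intro l m hlm
        rw [hRa] at hlm
        have hl : l = a := by
          have h0 : l ∈ ({a} : Clause V) := by rw [hlm]; exact Finset.mem_insert_self _ _
          simpa using h0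
        have hm : m = a := by
          have h0 : m ∈ ({a} : Clause V) := by
            rw [hlm]; exact Finset.mem_insert_of_mem (Finset.mem_singleton_self m)
          simpa using h0
        subst hl; subst hm
        refine ⟨cs1 ++ cs2' ++ cs1', by simp [hn1], ?_, ?_⟩
        · intro D hD
          simp only [List.mem_append] at hD
          rcases hD with (hD | hD) | hD
          exacts [hm1 D hD, hm2' D hD, hm1' D hD]
        · refine (hwa.append ?_).append hwa'
          rw [← hbx]; exact hwb'
      · -- R = {a, b}
        have hRab : R = ({a, b} : Clause V) := by
          rw [hR, ha, pair_erase_right hax, hb, pair_erase_right hbx, ← Finset.insert_eq]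
        intro l m hlm
        rw [hRab] at hlm
        have hlmem : l = a ∨ l = b := by
          have h0 : l ∈ ({a, b} : Clause V) := by
            rw [hlm]; exact Finset.mem_insert_self _ _
          simpa using h0
        have hmmem : m = a ∨ m = b := by
          have h0 : m ∈ ({a, b} : Clause V) := by
            rw [hlm]; exact Finset.mem_insert_of_mem (Finset.mem_singleton_self m)
          simpa using h0
        have hbmem : b = l ∨ b = m := by
          have h0 : b ∈ ({l, m} : Clause V) := by
            rw [← hlm]; exact Finset.mem_insert_of_mem (Finset.mem_singleton_self b)
          simpa using h0
        have hamem : a = l ∨ a = m := by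
          have h0 : a ∈ ({l, m} : Clause V) := by
            rw [← hlm]; exact Finset.mem_insert_self _ _
          simpa using h0
        rcases hlmem with hla | hlb
        · have hmb : m = b := by
            rcases hmmem with hma | hmb
            · rcases hbmem with hbl | hbm
              · rw [hma, ← hla, ← hbl]
              · exact hbm.symm
            · exact hmb
          subst hla; subst hmb
          refine ⟨cs1 ++ cs2', by simp [hn1], ?_, hwa.append hwb'⟩
          intro D hD
          rcases List.mem_append.1 hD with hD | hD
          exacts [hm1 D hD, hm2' D hD]
        · have hma : m = a := by
            rcases hmmem with hma | hmb
            · exact hma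
            · rcases hamem with hal | ham
              · rw [hmb, ← hlb, ← hal]
              · exact ham.symm
          subst hlb; subst hma
          refine ⟨cs2 ++ cs1', by simp [hn2], ?_, hwb.append hwa'⟩
          intro D hD
          rcases List.mem_append.1 hD with hD | hD
          exacts [hm2 D hD, hm1' D hD]

/-- Main lemma: any nonempty walk yields a read-once derivation of one of three
outcome clauses. -/
lemma main_walk : ∀ (n : ℕ) (cs : List (Clause V)) (l m : Lit V) (S : Multiset (Clause V)),
    cs.length ≤ n → WalkL l m cs → cs ≠ [] → (∀ C ∈ cs, C ∈ S) →
    ∃ O : Clause V,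
      (O = ({Lit.neg l, m} : Clause V) ∨ O = ({Lit.neg l} : Clause V) ∨ O = ({m} : Clause V)) ∧
      ∃ T, Relation.ReflTransGen RORStep S T ∧ O ∈ T := by
  intro n
  induction n with
  | zero =>
    intro cs l m S hlen hw hne _
    rw [Nat.le_zero, List.length_eq_zero_iff] at hlen
    exact absurd hlen hne
  | succ n ih =>
    intro cs l m S hlen hw hne hmem
    by_cases hnd : cs.Nodup
    · obtain ⟨O, R, hdisj, hRTG⟩ := fold cs l m hw hne
      have hle : (cs : Multiset (Clause V)) ≤ S := coe_le_of_nodup hnd hmem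
      have hs : (cs : Multiset (Clause V)) + (S - (cs : Multiset (Clause V))) = S := by
        rw [add_comm]; exact tsub_add_cancel_of_le hle
      refine ⟨O, hdisj, (O ::ₘ R) + (S - (cs : Multiset (Clause V))), ?_, ?_⟩
      · have h1 := RTG_add (S - (cs : Multiset (Clause V))) hRTG
        rwa [hs] at h1
      · exact Multiset.mem_add.2 (Or.inl (Multiset.mem_cons_self O R))
    · obtain ⟨A, B, C, c, rfl, hnd'⟩ := exists_dup_decomp _ hnd
      obtain ⟨w, hwP, hwtail⟩ := WalkL.split hw
      cases hwtail with
      | @cons _ v2 _ _ _ hc2 hwC =>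
        obtain ⟨u, hwA, hwmid⟩ := WalkL.split hwP
        cases hwmid with
        | @cons _ v _ _ _ hc1 hwB =>
          by_cases hv : v2 = v
          · -- same edge: shorten the walk
            have hw' : WalkL l m (A ++ c :: C) :=
              hwA.append (WalkL.cons c hc1 (by rw [← hv]; exact hwC))
            have hlen' : (A ++ c :: C).length ≤ n := by
              simp only [List.length_append, List.length_cons] at hlen ⊢
              omega
            refine ih (A ++ c :: C) l m S hlen' hw' (by simp) ?_
            intro D hD
            apply hmem
            simp only [List.mem_append, List.mem_cons] at hD ⊢
            tauto
          · -- crossed case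
            have hv2 : v2 = Lit.neg u := by
              have h0 : v2 ∈ ({Lit.neg u, v} : Clause V) := by
                rw [← hc1, hc2]
                exact Finset.mem_insert_of_mem (Finset.mem_singleton_self v2)
              rcases Finset.mem_insert.1 h0 with h0 | h0
              · exact h0
              · exact absurd (Finset.mem_singleton.1 h0) hv
            have hwv : Lit.neg w = v := by
              have h0 : Lit.neg w ∈ ({Lit.neg u, v} : Clause V) := by
                rw [← hc1, hc2]; exact Finset.mem_insert_self _ _
              rcases Finset.mem_insert.1 h0 with h0 | h0
              · exfalso
                have hvc : v ∈ ({Lit.neg w, v2} : Clause V) := by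
                  rw [← hc2, hc1]
                  exact Finset.mem_insert_of_mem (Finset.mem_singleton_self v)
                rcases Finset.mem_insert.1 hvc with h1 | h1
                · apply hv
                  rw [hv2, ← h0, ← h1]
                · exact hv (Finset.mem_singleton.1 h1).symm
              · exact Finset.mem_singleton.1 h0
            have huv : Lit.neg u ≠ v := fun hh => hv (hv2.trans hh)
            have hwB' : WalkL v (Lit.neg v) B := by
              have hwumm : w = Lit.neg v := by rw [← hwv, Lit.neg_neg]
              rwa [hwumm] at hwB
            have hBne : B ≠ [] := by
              rintro rfl
              exact Lit.neg_ne v (WalkL.nil_eq hwB').symm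
            obtain ⟨OB, RB, hOB, hRTGB⟩ := fold B v (Lit.neg v) hwB' hBne
            have hOBeq : OB = ({Lit.neg v} : Clause V) := by
              rcases hOB with h0 | h0 | h0
              · rw [h0, pair_self]
              · exact h0
              · exact h0
            rw [hOBeq] at hRTGB
            have hstep := RORStep_of c ({Lit.neg v} : Clause V) v
              (by rw [hc1]; exact Finset.mem_insert_of_mem (Finset.mem_singleton_self v))
              (Finset.mem_singleton_self _) RB
            have hres : c.erase v ∪ ({Lit.neg v} : Clause V).erase (Lit.neg v)
                = ({Lit.neg u} : Clause V) := by
              rw [hc1, pair_erase_right huv, Finset.erase_singleton, Finset.union_empty]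
            rw [hres] at hstep
            have hRTGcB : Relation.ReflTransGen RORStep (c ::ₘ (B : Multiset (Clause V)))
                (({Lit.neg u} : Clause V) ::ₘ RB) :=
              (RTG_cons c hRTGB).tail hstep
            have hwA' : WalkL (Lit.neg u) (Lit.neg l) A.reverse := hwA.skew
            obtain ⟨RA, hRTGA⟩ := FU A.reverse (Lit.neg u) (Lit.neg l) hwA'
            rw [Multiset.coe_reverse] at hRTGA
            have hleAB : ((A ++ c :: B : List (Clause V)) : Multiset (Clause V)) ≤ S := by
              apply coe_le_of_nodup hnd'
              intro d hd
              apply hmem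
              simp only [List.mem_append, List.mem_cons] at hd ⊢
              tauto
            set S0 := S - ((A ++ c :: B : List (Clause V)) : Multiset (Clause V)) with hS0def
            have hSsplit : ((A ++ c :: B : List (Clause V)) : Multiset (Clause V)) + S0 = S := by
              rw [hS0def, add_comm]; exact tsub_add_cancel_of_le hleAB
            have hcoe : ((A ++ c :: B : List (Clause V)) : Multiset (Clause V))
                = (A : Multiset (Clause V)) + (c ::ₘ (B : Multiset (Clause V))) := by
              simp
            have e1 : S
                = (c ::ₘ (B : Multiset (Clause V))) + ((A : Multiset (Clause V)) + S0) := by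
              rw [← hSsplit, hcoe, add_comm (A : Multiset (Clause V)) (c ::ₘ _), add_assoc]
            have step1 : Relation.ReflTransGen RORStep S
                ((({Lit.neg u} : Clause V) ::ₘ RB) + ((A : Multiset (Clause V)) + S0)) := by
              rw [e1]; exact RTG_add _ hRTGcB
            have e2 : ((({Lit.neg u} : Clause V) ::ₘ RB) + ((A : Multiset (Clause V)) + S0))
                = (({Lit.neg u} : Clause V) ::ₘ (A : Multiset (Clause V))) + (RB + S0) := by
              rw [Multiset.cons_add, Multiset.cons_add, add_left_comm]
            have step2 := RTG_add (RB + S0) hRTGA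
            refine ⟨({Lit.neg l} : Clause V), Or.inr (Or.inl rfl),
              ((({Lit.neg l} : Clause V) ::ₘ RA) + (RB + S0)), ?_, ?_⟩
            · have step1' : Relation.ReflTransGen RORStep S
                  ((({Lit.neg u} : Clause V) ::ₘ (A : Multiset (Clause V))) + (RB + S0)) := by
                rw [← e2]; exact step1
              exact step1'.trans step2
            · exact Multiset.mem_add.2 (Or.inl (Multiset.mem_cons_self _ _))

end Aux

/-- If the unit clause `(x_i)` can be derived from a 2CNF formula `Φ`
by resolution, then it can be derived by a read-once resolution derivation. -/
theorem stmt14 {V : Type} [DecidableEq V] (Φ : CNF V) (h2 : CNF.is2CNF Φ) (xi : V)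
    (h : Derives Φ ({(xi, true)} : Clause V)) :
    RORDeriv Φ.val ({(xi, true)} : Clause V) := by
  obtain ⟨hcard, hwalk⟩ := derives_walk h2 h
  obtain ⟨cs, hne, hmem, hw⟩ := hwalk (xi, true) (xi, true) (pair_self _).symm
  have hmem' : ∀ C ∈ cs, C ∈ Φ.val := fun C hC => by rw [Finset.mem_val]; exact hmem C hC
  obtain ⟨O, hdisj, T, hRTG, hOT⟩ :=
    main_walk cs.length cs (Lit.neg (xi, true)) (xi, true) Φ.val le_rfl hw hne hmem'
  have hO : O = ({(xi, true)} : Clause V) := by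
    rcases hdisj with h0 | h0 | h0
    · rw [h0, Lit.neg_neg, pair_self]
    · rw [h0, Lit.neg_neg]
    · exact h0
  exact ⟨T, hRTG, hO ▸ hOT⟩
end

section
/- Every unsatisfiable 2CNF formula Φ has copy complexity at most 2: there exists a multiset Φ' of clauses such that every clause of Φ' is a clause of Φ, every clause of Φ appears at most twice in Φ', and Φ' has a read-once resolution refutation. Equivalently, Φ has a resolution refutation in which each input clause is used in at most two resolution steps. -/
set_option linter.unusedSectionVars false

namespace S16

variable {V : Type} [DecidableEq V]

@[simp] lemma neg_neg (l : Lit V) : l.neg.neg = l := by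
  cases l; simp [Lit.neg]

lemma neg_ne (l : Lit V) : l.neg ≠ l := by
  cases l with
  | mk x b => cases b <;> simp [Lit.neg]

/-- The clause corresponding to implication edge `u → v`. -/
def mkC (u v : Lit V) : Clause V := insert u.neg {v}

lemma mkC_symm (u v : Lit V) : mkC v.neg u.neg = mkC u v := by
  simp only [mkC, neg_neg]
  rw [Finset.insert_eq, Finset.insert_eq, Finset.union_comm]

lemma mem_mkC_left (u v : Lit V) : u.neg ∈ mkC u v := Finset.mem_insert_self _ _
lemma mem_mkC_right (u v : Lit V) : v ∈ mkC u v := by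
  simp [mkC]

lemma pairEq {a b a' b' : Lit V} (h : mkC a b = mkC a' b') :
    (a' = a ∧ b' = b) ∨ (a' = b.neg ∧ b' = a.neg) := by
  have hb : b ∈ mkC a' b' := h ▸ mem_mkC_right a b
  have ha' : a'.neg ∈ mkC a b := h ▸ mem_mkC_left a' b'
  have hb' : b' ∈ mkC a b := h ▸ mem_mkC_right a' b'
  have ha : a.neg ∈ mkC a' b' := h ▸ mem_mkC_left a b
  simp only [mkC, Finset.mem_insert, Finset.mem_singleton] at hb ha' hb' ha
  have hinj : ∀ x y : Lit V, x.neg = y.neg → x = y := by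
    intro x y hxy
    have := congrArg Lit.neg hxy
    simpa using this
  rcases hb' with h1 | h1
  · rcases ha' with h2 | h2
    · -- b' = a.neg, a'.neg = a.neg
      have ha'a : a' = a := hinj _ _ h2
      rcases hb with h3 | h3
      · -- b = a'.neg = a.neg
        rw [h2] at h3
        left
        exact ⟨ha'a, by rw [h1, h3]⟩
      · left; exact ⟨ha'a, h3.symm⟩
    · -- b' = a.neg, a'.neg = b
      right
      constructor
      · have := congrArg Lit.neg h2
        simpa using this
      · exact h1
  · rcases ha' with h2 | h2
    · left; exact ⟨hinj _ _ h2, h1⟩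
    · -- b' = b, a'.neg = b
      have ha'b : a' = b.neg := by
        have := congrArg Lit.neg h2
        simpa using this
      rcases ha with h3 | h3
      · -- a.neg = a'.neg
        left
        refine ⟨hinj _ _ h3.symm, h1⟩
      · right; exact ⟨ha'b, h3.symm⟩

variable (Φ : CNF V)

/-- Implication edge. -/
def Edg (u v : Lit V) : Prop := mkC u v ∈ Φ

lemma Edg.symm {u v : Lit V} (h : Edg Φ u v) : Edg Φ v.neg u.neg := by
  unfold Edg at *; rw [mkC_symm]; exact h

/-- Walks in the implication graph, recording the list of clauses used. -/
inductive Wk : Lit V → List (Clause V) → Lit V → Prop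
  | nil (u : Lit V) : Wk u [] u
  | cons {u v w : Lit V} {cs : List (Clause V)} :
      Edg Φ u v → Wk v cs w → Wk u (mkC u v :: cs) w

lemma Wk.append {u v w : Lit V} {l1 l2 : List (Clause V)}
    (h1 : Wk Φ u l1 v) (h2 : Wk Φ v l2 w) : Wk Φ u (l1 ++ l2) w := by
  induction h1 with
  | nil => simpa
  | cons e _ ih => exact Wk.cons e (ih h2)

lemma Wk.single {u v : Lit V} (e : Edg Φ u v) : Wk Φ u [mkC u v] v :=
  Wk.cons e (Wk.nil v)

lemma Wk.consC {u v w : Lit V} {cs : List (Clause V)} {c : Clause V}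
    (e : Edg Φ u v) (hc : c = mkC u v) (h : Wk Φ v cs w) : Wk Φ u (c :: cs) w := by
  rw [hc]; exact Wk.cons e h

lemma Wk.singleC {u v : Lit V} {c : Clause V} (e : Edg Φ u v) (hc : c = mkC u v) :
    Wk Φ u [c] v := Wk.consC Φ e hc (Wk.nil v)

lemma Wk.mem {u w : Lit V} {cs : List (Clause V)} (h : Wk Φ u cs w) :
    ∀ c ∈ cs, c ∈ Φ := by
  induction h with
  | nil => simp
  | cons e _ ih =>
    intro c hc
    rcases List.mem_cons.1 hc with h | h
    · subst h; exact e
    · exact ih c h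

lemma Wk.split {u w : Lit V} {c : Clause V} :
    ∀ {l1 : List (Clause V)} {l2 : List (Clause V)},
    Wk Φ u (l1 ++ c :: l2) w →
    ∃ a b, c = mkC a b ∧ Edg Φ a b ∧ Wk Φ u l1 a ∧ Wk Φ b l2 w := by
  intro l1
  induction l1 generalizing u with
  | nil =>
    intro l2 h
    cases h with
    | cons e h' => exact ⟨_, _, rfl, e, Wk.nil u, h'⟩
  | cons d l1' ih =>
    intro l2 h
    cases h with
    | cons e h' =>
      obtain ⟨a, b, hc, he, hw1, hw2⟩ := ih h'
      exact ⟨a, b, hc, he, Wk.cons e hw1, hw2⟩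

lemma rtg_wk {u v : Lit V} (h : Relation.ReflTransGen (Edg Φ) u v) :
    ∃ cs, Wk Φ u cs v := by
  induction h with
  | refl => exact ⟨[], Wk.nil u⟩
  | tail _ e ih =>
    obtain ⟨cs, hw⟩ := ih
    exact ⟨cs ++ [mkC _ _], hw.append Φ (Wk.single Φ e)⟩

lemma rtg_skew {u v : Lit V} (h : Relation.ReflTransGen (Edg Φ) u v) :
    Relation.ReflTransGen (Edg Φ) v.neg u.neg := by
  induction h with
  | refl => exact Relation.ReflTransGen.refl
  | tail _ e ih => exact Relation.ReflTransGen.head (e.symm Φ) ih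

lemma Wk.eq_of_nil {u w : Lit V} (h : Wk Φ u [] w) : u = w := by
  cases h; rfl

lemma eq_or_neg_of_fst {p q : Lit V} (h : p.1 = q.1) : p = q ∨ p = q.neg := by
  obtain ⟨x, b⟩ := p; obtain ⟨y, c⟩ := q
  simp only at h; subst h
  cases b <;> cases c <;> simp [Lit.neg]

lemma step_lit {Φ : CNF V} (h2 : CNF.is2CNF Φ) {C : Clause V} (hC : C ∈ Φ)
    {p : Lit V} (hp : p ∈ C) : ∃ q ∈ C, Edg Φ p.neg q := by
  by_cases h0 : C.erase p = ∅
  · have hCp : C = {p} := by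
      rw [← Finset.insert_erase hp, h0]; rfl
    refine ⟨p, hp, ?_⟩
    unfold Edg
    have : mkC p.neg p = C := by
      rw [hCp]; simp [mkC]
    rw [this]; exact hC
  · obtain ⟨q, hq⟩ := Finset.nonempty_iff_ne_empty.2 h0
    have hcard : (C.erase p).card ≤ 1 := by
      have := Finset.card_erase_of_mem hp
      have := h2 C hC
      omega
    have herase : C.erase p = {q} := by
      apply Finset.eq_singleton_iff_unique_mem.2
      exact ⟨hq, fun x hx => Finset.card_le_one.1 hcard x hx q hq⟩
    refine ⟨q, Finset.mem_of_mem_erase hq, ?_⟩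
    unfold Edg
    have : mkC p.neg q = C := by
      rw [← Finset.insert_erase hp, herase]; simp [mkC]
    rw [this]; exact hC

lemma sat_of_noContra :
    ∀ (n : ℕ) (Φ : CNF V), CNF.is2CNF Φ → (CNF.vars Φ).card ≤ n → (∅ : Clause V) ∉ Φ →
    (∀ u : Lit V, ¬ Relation.ReflTransGen (Edg Φ) u u.neg ∨
      ¬ Relation.ReflTransGen (Edg Φ) u.neg u) →
    CNF.sat Φ := by
  intro n
  induction n with
  | zero =>
    intro Φ h2 hcard hne _
    by_cases hΦ : Φ = ∅
    · exact ⟨fun _ => true, by simp [hΦ]⟩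
    · exfalso
      obtain ⟨C, hC⟩ := Finset.nonempty_iff_ne_empty.2 hΦ
      obtain ⟨m, hm⟩ := Finset.nonempty_iff_ne_empty.2 (fun h => hne (h ▸ hC))
      have : m.1 ∈ CNF.vars Φ :=
        Finset.mem_biUnion.2 ⟨C, hC, Finset.mem_image.2 ⟨m, hm, rfl⟩⟩
      have := Finset.card_pos.2 ⟨m.1, this⟩
      omega
  | succ n ih =>
    intro Φ h2 hcard hne hno
    classical
    by_cases hΦ : Φ = ∅
    · exact ⟨fun _ => true, by simp [hΦ]⟩
    obtain ⟨C₀, hC₀⟩ := Finset.nonempty_iff_ne_empty.2 hΦ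
    obtain ⟨m, hm⟩ := Finset.nonempty_iff_ne_empty.2 (fun h => hne (h ▸ hC₀))
    obtain ⟨l₀, hl₀var, hl₀⟩ : ∃ l₀ : Lit V, l₀.1 = m.1 ∧
        ¬ Relation.ReflTransGen (Edg Φ) l₀ l₀.neg := by
      rcases hno m with h | h
      · exact ⟨m, rfl, h⟩
      · exact ⟨m.neg, rfl, by simpa using h⟩
    set Φ' := Φ.filter (fun C => ∀ p ∈ C, ¬ Relation.ReflTransGen (Edg Φ) l₀ p) with hΦ'def
    have hsub : Φ' ⊆ Φ := Finset.filter_subset _ _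
    have hfilt : ∀ C ∈ Φ', ∀ p ∈ C, ¬ Relation.ReflTransGen (Edg Φ) l₀ p :=
      fun C hC => (Finset.mem_filter.1 hC).2
    have hstep : ∀ C ∈ Φ', ∀ p ∈ C, ¬ Relation.ReflTransGen (Edg Φ) l₀ p.neg := by
      intro C hC' p hp hcon
      obtain ⟨q, hqC, hedge⟩ := step_lit h2 (hsub hC') hp
      exact hfilt C hC' q hqC (hcon.tail hedge)
    have hvars' : CNF.vars Φ' ⊆ CNF.vars Φ := by
      intro x hx
      obtain ⟨C, hC, hx⟩ := Finset.mem_biUnion.1 hx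
      exact Finset.mem_biUnion.2 ⟨C, hsub hC, hx⟩
    have hx₀ : l₀.1 ∉ CNF.vars Φ' := by
      intro hx
      obtain ⟨C, hC, hx⟩ := Finset.mem_biUnion.1 hx
      obtain ⟨p, hp, hpx⟩ := Finset.mem_image.1 hx
      rcases eq_or_neg_of_fst hpx with h | h
      · exact hfilt C hC p hp (h ▸ Relation.ReflTransGen.refl)
      · refine hstep C hC p hp ?_
        rw [h, neg_neg]
    have hx₀in : l₀.1 ∈ CNF.vars Φ :=
      Finset.mem_biUnion.2 ⟨C₀, hC₀, Finset.mem_image.2 ⟨m, hm, hl₀var.symm⟩⟩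
    have hlt : (CNF.vars Φ').card < (CNF.vars Φ).card :=
      Finset.card_lt_card ((Finset.ssubset_iff_of_subset hvars').2 ⟨l₀.1, hx₀in, hx₀⟩)
    have hmono : ∀ a b : Lit V, Edg Φ' a b → Edg Φ a b := fun a b e => hsub e
    obtain ⟨a', ha'⟩ := ih Φ' (fun C hC => h2 C (hsub hC)) (by omega)
      (fun h => hne (hsub h))
      (fun u => by
        rcases hno u with h | h
        · exact Or.inl (fun hr => h (Relation.ReflTransGen.mono hmono _ _ hr))
        · exact Or.inr (fun hr => h (Relation.ReflTransGen.mono hmono _ _ hr)))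
    refine ⟨fun y => if Relation.ReflTransGen (Edg Φ) l₀ (y, true) then true
      else if Relation.ReflTransGen (Edg Φ) l₀ (y, false) then false else a' y, ?_⟩
    intro C hCΦ
    by_cases hC' : C ∈ Φ'
    · obtain ⟨p, hp, hval⟩ := ha' C hC'
      have h1 : ¬ Relation.ReflTransGen (Edg Φ) l₀ (p.1, true) ∧
          ¬ Relation.ReflTransGen (Edg Φ) l₀ (p.1, false) := by
        have hA := hfilt C hC' p hp
        have hB := hstep C hC' p hp
        obtain ⟨px, pb⟩ := p
        cases pb
        · exact ⟨by simpa [Lit.neg] using hB, hA⟩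
        · exact ⟨hA, by simpa [Lit.neg] using hB⟩
      refine ⟨p, hp, ?_⟩
      show (if Relation.ReflTransGen (Edg Φ) l₀ (p.1, true) then true
        else if Relation.ReflTransGen (Edg Φ) l₀ (p.1, false) then false else a' p.1) = p.2
      rw [if_neg h1.1, if_neg h1.2]
      exact hval
    · have hex : ∃ p ∈ C, Relation.ReflTransGen (Edg Φ) l₀ p := by
        by_contra h
        push_neg at h
        exact hC' (Finset.mem_filter.2 ⟨hCΦ, h⟩)
      obtain ⟨p, hp, hrt⟩ := hex
      refine ⟨p, hp, ?_⟩
      show (if Relation.ReflTransGen (Edg Φ) l₀ (p.1, true) then true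
        else if Relation.ReflTransGen (Edg Φ) l₀ (p.1, false) then false else a' p.1) = p.2
      obtain ⟨px, pb⟩ := p
      cases pb
      · have hneg : ¬ Relation.ReflTransGen (Edg Φ) l₀ (px, true) := by
          intro hcon
          have hs := rtg_skew Φ hrt
          simp only [Lit.neg] at hs
          exact hl₀ (hcon.trans (by simpa [Lit.neg] using hs))
        rw [if_neg hneg, if_pos hrt]
      · rw [if_pos hrt]

lemma split1 {α : Type} {l : List α} {c : α} (h : c ∈ l) : ∃ s t, l = s ++ c :: t :=
  List.append_of_mem h

lemma split2 {α : Type} [DecidableEq α] {l : List α} {c : α} (h : 2 ≤ l.count c) :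
    ∃ l1 l2 l3, l = l1 ++ c :: (l2 ++ c :: l3) := by
  induction l with
  | nil => simp at h
  | cons a t ih =>
    by_cases hac : a = c
    · subst hac
      have h1 : 1 ≤ t.count a := by
        rw [List.count_cons_self] at h; omega
      have hmem : a ∈ t := List.count_pos_iff.1 h1
      obtain ⟨s, r, hr⟩ := split1 hmem
      exact ⟨[], s, r, by rw [hr]; simp⟩
    · have h2 : 2 ≤ t.count c := by
        simpa [List.count_cons, hac, Ne.symm hac] using h
      obtain ⟨l1, l2, l3, hl⟩ := ih h2
      exact ⟨a :: l1, l2, l3, by rw [hl]; simp⟩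

lemma mem_of_count_pos {α : Type} [DecidableEq α] {l : List α} {c : α}
    (h : 0 < l.count c) : c ∈ l := List.count_pos_iff.1 h

lemma redA {Φ : CNF V} {x : Lit V} {ps qs : List (Clause V)} {c : Clause V}
    (hP : Wk Φ x ps x.neg) (hQ : Wk Φ x.neg qs x)
    (hc2 : 2 ≤ ps.count c) (hc3 : 3 ≤ ps.count c + qs.count c) :
    ∃ (y : Lit V) (ps' qs' : List (Clause V)),
      Wk Φ y ps' y.neg ∧ Wk Φ y.neg qs' y ∧
      ps'.length + qs'.length < ps.length + qs.length := by
  obtain ⟨p1, p2, p3, hps⟩ := split2 hc2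
  subst hps
  obtain ⟨a, b, hc1, he1, hw1, hw2⟩ := Wk.split Φ hP
  obtain ⟨a2, b2, hcc2, he2, hw3, hw4⟩ := Wk.split Φ hw2
  have hlen : (p1 ++ c :: (p2 ++ c :: p3)).length
      = p1.length + p2.length + p3.length + 2 := by simp; omega
  rcases pairEq (hc1.symm.trans hcc2) with ⟨ha2, hb2⟩ | ⟨ha2, hb2⟩
  · -- same edge twice in ps: shorten ps
    subst ha2; subst hb2
    refine ⟨x, p1 ++ c :: p3, qs, ?_, hQ, ?_⟩
    · exact hw1.append Φ (Wk.consC Φ he1 hc1 hw4)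
    · simp only [hlen, List.length_append, List.length_cons]; omega
  · -- skew pair: find a third occurrence
    subst ha2; subst hb2
    have hsum : 3 ≤ p1.count c + p2.count c + p3.count c + 2 + qs.count c := by
      have : (p1 ++ c :: (p2 ++ c :: p3)).count c
          = p1.count c + p2.count c + p3.count c + 2 := by
        simp [List.count_append, List.count_cons_self]; omega
      omega
    have hdisj : 0 < p1.count c ∨ 0 < p2.count c ∨ 0 < p3.count c ∨ 0 < qs.count c := by
      omega
    rcases hdisj with h | h | h | h
    · -- third occurrence in p1
      obtain ⟨s, t, hst⟩ := split1 (mem_of_count_pos h)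
      subst hst
      obtain ⟨a3, b3, hc3', he3, hu1, hu2⟩ := Wk.split Φ hw1
      rcases pairEq (hc1.symm.trans hc3') with ⟨ha3, hb3⟩ | ⟨ha3, hb3⟩
      · subst ha3; subst hb3
        refine ⟨x, s ++ c :: (p2 ++ c :: p3), qs, ?_, hQ, ?_⟩
        · exact hu1.append Φ (Wk.consC Φ he1 hc1 hw2)
        · simp only [hlen, List.length_append, List.length_cons]; simp; omega
      · subst ha3; subst hb3
        refine ⟨x, s ++ c :: p3, qs, ?_, hQ, ?_⟩
        · exact hu1.append Φ (Wk.consC Φ he2 hcc2 hw4)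
        · simp only [hlen, List.length_append, List.length_cons]; simp; omega
    · -- third occurrence in p2
      obtain ⟨s, t, hst⟩ := split1 (mem_of_count_pos h)
      subst hst
      obtain ⟨a3, b3, hc3', he3, hu1, hu2⟩ := Wk.split Φ hw3
      rcases pairEq (hc1.symm.trans hc3') with ⟨ha3, hb3⟩ | ⟨ha3, hb3⟩
      · subst ha3; subst hb3
        refine ⟨x, p1 ++ c :: (t ++ c :: p3), qs, ?_, hQ, ?_⟩
        · exact hw1.append Φ (Wk.consC Φ he1 hc1
            (hu2.append Φ (Wk.consC Φ he2 hcc2 hw4)))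
        · simp only [hlen, List.length_append, List.length_cons]; simp; omega
      · subst ha3; subst hb3
        refine ⟨x, p1 ++ c :: (s ++ c :: p3), qs, ?_, hQ, ?_⟩
        · exact hw1.append Φ (Wk.consC Φ he1 hc1
            (hu1.append Φ (Wk.consC Φ he3 hc3' hw4)))
        · simp only [hlen, List.length_append, List.length_cons]; simp; omega
    · -- third occurrence in p3
      obtain ⟨s, t, hst⟩ := split1 (mem_of_count_pos h)
      subst hst
      obtain ⟨a3, b3, hc3', he3, hu1, hu2⟩ := Wk.split Φ hw4
      rcases pairEq (hc1.symm.trans hc3') with ⟨ha3, hb3⟩ | ⟨ha3, hb3⟩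
      · subst ha3; subst hb3
        refine ⟨x, p1 ++ c :: t, qs, ?_, hQ, ?_⟩
        · exact hw1.append Φ (Wk.consC Φ he1 hc1 hu2)
        · simp only [hlen, List.length_append, List.length_cons]; simp; omega
      · subst ha3; subst hb3
        refine ⟨x, p1 ++ c :: (p2 ++ c :: t), qs, ?_, hQ, ?_⟩
        · exact hw1.append Φ (Wk.consC Φ he1 hc1
            (hw3.append Φ (Wk.consC Φ he2 hcc2 hu2)))
        · simp only [hlen, List.length_append, List.length_cons]; simp; omega
    · -- third occurrence in qs
      obtain ⟨s, t, hst⟩ := split1 (mem_of_count_pos h)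
      subst hst
      obtain ⟨a4, b4, hc4', he4, hv1, hv2⟩ := Wk.split Φ hQ
      rcases pairEq (hc1.symm.trans hc4') with ⟨ha4, hb4⟩ | ⟨ha4, hb4⟩
      · rw [ha4] at hv1
        refine ⟨b, p2, c :: (p3 ++ (s ++ [c])), hw3, ?_, ?_⟩
        · exact Wk.consC Φ he2 hcc2 (hw4.append Φ (hv1.append Φ
            (Wk.singleC Φ he1 hc1)))
        · simp only [hlen, List.length_append, List.length_cons]; simp; omega
      · rw [hb4] at hv2
        rw [ha4, hb4] at he4 hc4'
        refine ⟨b, p2, c :: (t ++ (p1 ++ [c])), hw3, ?_, ?_⟩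
        · exact Wk.consC Φ he4 hc4' (hv2.append Φ (hw1.append Φ
            (Wk.singleC Φ he1 hc1)))
        · simp only [hlen, List.length_append, List.length_cons]; simp; omega

lemma reduce {Φ : CNF V} :
    ∀ (n : ℕ) (x : Lit V) (ps qs : List (Clause V)),
      ps.length + qs.length ≤ n →
      Wk Φ x ps x.neg → Wk Φ x.neg qs x →
      ∃ (y : Lit V) (ps' qs' : List (Clause V)),
        Wk Φ y ps' y.neg ∧ Wk Φ y.neg qs' y ∧
        ∀ c, (ps' ++ qs').count c ≤ 2 := by
  intro n
  induction n with
  | zero =>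
    intro x ps qs hn hP hQ
    by_cases hok : ∀ c, ((ps ++ qs).count c ≤ 2)
    · exact ⟨x, ps, qs, hP, hQ, hok⟩
    · push_neg at hok
      obtain ⟨c, hcgt⟩ := hok
      rw [List.count_append] at hcgt
      have : 2 ≤ ps.count c ∨ 2 ≤ qs.count c := by omega
      rcases this with h | h
      · obtain ⟨y, ps', qs', _, _, hlt⟩ := redA hP hQ h (by omega)
        omega
      · have hP' : Wk Φ x.neg qs (x.neg).neg := by rw [neg_neg]; exact hQ
        have hQ' : Wk Φ (x.neg).neg ps x.neg := by rw [neg_neg]; exact hP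
        obtain ⟨y, ps', qs', _, _, hlt⟩ := redA hP' hQ' h (by omega)
        omega
  | succ n ih =>
    intro x ps qs hn hP hQ
    by_cases hok : ∀ c, ((ps ++ qs).count c ≤ 2)
    · exact ⟨x, ps, qs, hP, hQ, hok⟩
    · push_neg at hok
      obtain ⟨c, hcgt⟩ := hok
      rw [List.count_append] at hcgt
      have : 2 ≤ ps.count c ∨ 2 ≤ qs.count c := by omega
      rcases this with h | h
      · obtain ⟨y, ps', qs', hP', hQ', hlt⟩ := redA hP hQ h (by omega)
        exact ih y ps' qs' (by omega) hP' hQ'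
      · have hPs : Wk Φ x.neg qs (x.neg).neg := by rw [neg_neg]; exact hQ
        have hQs : Wk Φ (x.neg).neg ps x.neg := by rw [neg_neg]; exact hP
        obtain ⟨y, ps', qs', hP', hQ', hlt⟩ := redA hPs hQs h (by omega)
        exact ih y ps' qs' (by omega) hP' hQ'

end S16



namespace S16
variable {V : Type} [DecidableEq V]

lemma chain {Φ : CNF V} {u w : Lit V} {cs : List (Clause V)}
    (hwk : Wk Φ u cs w) (hne : cs ≠ []) (M : Multiset (Clause V)) :
    ∃ (R : Clause V) (J : Multiset (Clause V)), R ⊆ insert u.neg {w} ∧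
      Relation.ReflTransGen RORStep ((↑cs : Multiset (Clause V)) + M)
        (R ::ₘ (J + M)) := by
  induction hwk generalizing M with
  | nil => exact absurd rfl hne
  | @cons u v w cs' e htail ih =>
    rcases eq_or_ne cs' [] with hnil | hnil
    · subst hnil
      have hvw : v = w := Wk.eq_of_nil Φ htail
      subst hvw
      refine ⟨mkC u v, 0, by rfl, ?_⟩
      have : (↑([mkC u v]) : Multiset (Clause V)) + M = mkC u v ::ₘ (0 + M) := by
        simp
      rw [this]
    · obtain ⟨R', J', hsub', hsteps'⟩ := ih hnil (mkC u v ::ₘ M)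
      have heq : (↑(mkC u v :: cs') : Multiset (Clause V)) + M
          = ↑cs' + (mkC u v ::ₘ M) := by
        have h1 : (↑(mkC u v :: cs') : Multiset (Clause V)) = mkC u v ::ₘ ↑cs' := rfl
        rw [h1, Multiset.cons_add, Multiset.add_cons]
      by_cases hvm : v.neg ∈ R'
      · -- resolve mkC u v with R' on the variable of v
        set Rnew : Clause V := if v.2 then
            ((mkC u v).erase (v.1, true)) ∪ (R'.erase (v.1, false))
          else (R'.erase (v.1, true)) ∪ ((mkC u v).erase (v.1, false)) with hRdef
        have hS : R' ::ₘ (J' + (mkC u v ::ₘ M))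
            = mkC u v ::ₘ (R' ::ₘ (J' + M)) := by
          rw [Multiset.add_cons, Multiset.cons_swap]
        have hstep : RORStep (R' ::ₘ (J' + (mkC u v ::ₘ M))) (Rnew ::ₘ (J' + M)) := by
          cases hv2 : v.2 with
          | true =>
            have hvt : ((v.1, true) : Lit V) = v := by rw [← hv2]
            have hvf : ((v.1, false) : Lit V) = v.neg := by simp [Lit.neg, hv2]
            refine ⟨mkC u v, R', Rnew, v.1, ?_, ?_, ⟨?_, ?_, ?_⟩, ?_⟩
            · rw [hS]; exact Multiset.mem_cons_self _ _
            · rw [hS, Multiset.erase_cons_head]; exact Multiset.mem_cons_self _ _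
            · rw [hvt]; exact mem_mkC_right u v
            · rw [hvf]; exact hvm
            · simp [hRdef, hv2]
            · rw [hS, Multiset.erase_cons_head, Multiset.erase_cons_head]
          | false =>
            have hvt : ((v.1, true) : Lit V) = v.neg := by simp [Lit.neg, hv2]
            have hvf : ((v.1, false) : Lit V) = v := by rw [← hv2]
            refine ⟨R', mkC u v, Rnew, v.1, ?_, ?_, ⟨?_, ?_, ?_⟩, ?_⟩
            · exact Multiset.mem_cons_self _ _
            · rw [Multiset.erase_cons_head]
              simp
            · rw [hvt]; exact hvm
            · rw [hvf]; exact mem_mkC_right u v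
            · simp [hRdef, hv2]
            · rw [Multiset.erase_cons_head]
              congr 1
              rw [Multiset.add_cons, Multiset.erase_cons_head]
        refine ⟨Rnew, J', ?_, ?_⟩
        · intro y hy
          have hy' : y ∈ ((mkC u v).erase v) ∪ (R'.erase v.neg) := by
            cases hv2 : v.2 with
            | true =>
              have hvt : ((v.1, true) : Lit V) = v := by rw [← hv2]
              have hvf : ((v.1, false) : Lit V) = v.neg := by simp [Lit.neg, hv2]
              simpa [hRdef, hv2, hvt, hvf] using hy
            | false =>
              have hvt : ((v.1, true) : Lit V) = v.neg := by simp [Lit.neg, hv2]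
              have hvf : ((v.1, false) : Lit V) = v := by rw [← hv2]
              have := hy
              simp only [hRdef, hv2, Bool.false_eq_true, if_false, hvt, hvf] at this
              rw [Finset.union_comm] at this
              exact this
          rcases Finset.mem_union.1 hy' with h | h
          · have h1 := Finset.mem_of_mem_erase h
            have h2 := Finset.ne_of_mem_erase h
            rcases Finset.mem_insert.1 h1 with h3 | h3
            · exact Finset.mem_insert.2 (Or.inl h3)
            · exact absurd (Finset.mem_singleton.1 h3) h2
          · have h1 := hsub' (Finset.mem_of_mem_erase h)
            have h2 := Finset.ne_of_mem_erase h
            rcases Finset.mem_insert.1 h1 with h3 | h3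
            · exact absurd h3 h2
            · exact Finset.mem_insert.2 (Or.inr h3)
        · rw [heq]
          exact hsteps'.tail hstep
      · refine ⟨R', mkC u v ::ₘ J', ?_, ?_⟩
        · intro y hy
          have h1 := hsub' hy
          rcases Finset.mem_insert.1 h1 with h3 | h3
          · exact absurd (h3 ▸ hy) hvm
          · exact Finset.mem_insert.2 (Or.inr h3)
        · rw [heq]
          have : J' + (mkC u v ::ₘ M) = (mkC u v ::ₘ J') + M := by
            rw [Multiset.add_cons, Multiset.cons_add]
          rw [← this]
          exact hsteps'

end S16

/-- Every unsatisfiable 2CNF formula has copy complexity at most 2: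
there is a multiset of clauses of `Φ`, containing each clause of `Φ` at most twice,
which has a read-once resolution refutation. -/
theorem stmt16 {V : Type} [DecidableEq V] (Φ : CNF V)
    (h2 : CNF.is2CNF Φ) (hunsat : CNF.unsat Φ) :
    ∃ Φ' : Multiset (Clause V),
      (∀ C ∈ Φ', C ∈ Φ) ∧ (∀ C ∈ Φ, Φ'.count C ≤ 2) ∧
      RORDeriv Φ' (∅ : Clause V) := by
  classical
  by_cases hemp : (∅ : Clause V) ∈ Φ
  · refine ⟨{∅}, ?_, ?_, ⟨{∅}, Relation.ReflTransGen.refl, by simp⟩⟩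
    · intro C hC
      rw [Multiset.mem_singleton] at hC
      rw [hC]; exact hemp
    · intro C _
      rw [Multiset.count_singleton]
      split <;> omega
  · have hnc : ∃ u : Lit V, Relation.ReflTransGen (S16.Edg Φ) u u.neg ∧
        Relation.ReflTransGen (S16.Edg Φ) u.neg u := by
      by_contra h
      push_neg at h
      refine hunsat (S16.sat_of_noContra (CNF.vars Φ).card Φ h2 le_rfl hemp ?_)
      intro u
      by_cases hu : Relation.ReflTransGen (S16.Edg Φ) u u.neg
      · exact Or.inr (h u hu)
      · exact Or.inl hu
    obtain ⟨u, hu1, hu2⟩ := hnc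
    obtain ⟨ps0, hps0⟩ := S16.rtg_wk Φ hu1
    obtain ⟨qs0, hqs0⟩ := S16.rtg_wk Φ hu2
    obtain ⟨y, ps, qs, hP, hQ, hcnt⟩ :=
      S16.reduce (ps0.length + qs0.length) u ps0 qs0 le_rfl hps0 hqs0
    have hpsne : ps ≠ [] := by
      intro h; subst h
      exact S16.neg_ne y (S16.Wk.eq_of_nil Φ hP).symm
    have hqsne : qs ≠ [] := by
      intro h; subst h
      exact S16.neg_ne y (S16.Wk.eq_of_nil Φ hQ)
    refine ⟨↑(ps ++ qs), ?_, ?_, ?_⟩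
    · intro C hC
      rw [Multiset.mem_coe, List.mem_append] at hC
      rcases hC with h | h
      · exact S16.Wk.mem Φ hP C h
      · exact S16.Wk.mem Φ hQ C h
    · intro C _
      rw [Multiset.coe_count]
      exact hcnt C
    · obtain ⟨R1, J1, hR1sub, hsteps1⟩ := S16.chain hP hpsne ↑qs
      have e1 : (↑(ps ++ qs) : Multiset (Clause V)) = ↑ps + ↑qs := rfl
      have hsteps1' : Relation.ReflTransGen RORStep (↑(ps ++ qs) : Multiset (Clause V))
          (R1 ::ₘ (J1 + ↑qs)) := by rw [e1]; exact hsteps1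
      have hR1' : R1 = ∅ ∨ R1 = {y.neg} := by
        have h0 : insert (Lit.neg y) ({Lit.neg y} : Clause V) = {Lit.neg y} := by simp
        rw [h0] at hR1sub
        exact Finset.subset_singleton_iff.1 hR1sub
      rcases hR1' with h0 | hR1e
      · subst h0
        exact ⟨_, hsteps1', Multiset.mem_cons_self _ _⟩
      obtain ⟨R2, J2, hR2sub, hsteps2⟩ := S16.chain hQ hqsne (R1 ::ₘ J1)
      have e2 : R1 ::ₘ (J1 + ↑qs) = ↑qs + (R1 ::ₘ J1) := by
        rw [← Multiset.cons_add]
        exact add_comm _ _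
      have hsteps2' : Relation.ReflTransGen RORStep (↑(ps ++ qs) : Multiset (Clause V))
          (R2 ::ₘ (J2 + (R1 ::ₘ J1))) := by
        rw [← e2] at hsteps2
        exact hsteps1'.trans hsteps2
      have hR2' : R2 = ∅ ∨ R2 = {y} := by
        rw [S16.neg_neg] at hR2sub
        have h0 : insert y ({y} : Clause V) = {y} := by simp
        rw [h0] at hR2sub
        exact Finset.subset_singleton_iff.1 hR2sub
      rcases hR2' with h0 | hR2e
      · subst h0
        exact ⟨_, hsteps2', Multiset.mem_cons_self _ _⟩
      subst hR1e; subst hR2e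
      have hfin : ∃ T, RORStep (({y} : Clause V) ::ₘ (J2 + (({y.neg} : Clause V) ::ₘ J1))) T
          ∧ (∅ : Clause V) ∈ T := by
        cases hy2 : y.2 with
        | true =>
          have hyt : ((y.1, true) : Lit V) = y := by rw [← hy2]
          have hyf : ((y.1, false) : Lit V) = y.neg := by simp [Lit.neg, hy2]
          refine ⟨_, ⟨{y}, {y.neg}, _, y.1, Multiset.mem_cons_self _ _, ?_,
            ⟨?_, ?_, rfl⟩, rfl⟩, ?_⟩
          · rw [Multiset.erase_cons_head]; simp
          · rw [hyt]; exact Finset.mem_singleton_self y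
          · rw [hyf]; exact Finset.mem_singleton_self _
          · have hres : ({y} : Clause V).erase (y.1, true)
                ∪ ({y.neg} : Clause V).erase (y.1, false) = ∅ := by
              rw [hyt, hyf]; simp
            exact Multiset.mem_cons.2 (Or.inl hres.symm)
        | false =>
          have hyt : ((y.1, true) : Lit V) = y.neg := by simp [Lit.neg, hy2]
          have hyf : ((y.1, false) : Lit V) = y := by rw [← hy2]
          have hne : ({y} : Clause V) ≠ ({y.neg} : Clause V) := by
            intro hh
            exact S16.neg_ne y (Finset.singleton_injective hh).symm
          refine ⟨_, ⟨{y.neg}, {y}, _, y.1, ?_, ?_, ⟨?_, ?_, rfl⟩, rfl⟩, ?_⟩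
          · simp
          · rw [Multiset.mem_erase_of_ne hne]
            exact Multiset.mem_cons_self _ _
          · rw [hyt]; exact Finset.mem_singleton_self _
          · rw [hyf]; exact Finset.mem_singleton_self _
          · have hres : ({y.neg} : Clause V).erase (y.1, true)
                ∪ ({y} : Clause V).erase (y.1, false) = ∅ := by
              rw [hyt, hyf]; simp
            exact Multiset.mem_cons.2 (Or.inl hres.symm)
      obtain ⟨T, hT, hmem⟩ := hfin
      exact ⟨T, hsteps2'.tail hT, hmem⟩
end
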